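/- arXiv:1905.09032 — 5 statements merged into one kernel-verified Lean document; each statement's English description precedes it below -/
import Mathlib

section
/- Let L = L₁ + L₂ be the orthogonal direct sum of two even nondegenerate lattices such that the 3-torsion subgroup of discr L₁ is cyclic of order 3 and discr L₂ is annihilated by 2. Let g be an isometry of L and let v be a 6-root of L (b(v,v) = 6 and 3 divides b(v,x) for every x ∈ L). Write v = v₁ + v₂ and g(v) = w₁ + w₂ with v₁, w₁ ∈ L₁ and v₂, w₂ ∈ L₂. Then: (i) if w₁ − v₁ ∈ 3L₁, then the automorphism of the 3-torsion subgroup of discr L induced by g is the identity; (ii) if g(v) − v ∉ 3L, then the automorphism of the 3-torsion subgroup of discr L induced by g is multiplication by −1. -/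
/-!  Basic framework for integral lattices given by Gram matrices. -/

structure IntLattice where
  n : ℕ
  B : Matrix (Fin n) (Fin n) ℤ

namespace IntLattice

/-- The bilinear form of the lattice on `ℤ^n`. -/
def bform (L : IntLattice) (x y : Fin L.n → ℤ) : ℤ :=
  dotProduct x (L.B.mulVec y)

/-- The rational extension of the bilinear form, on `ℚ^n = L ⊗ ℚ`. -/
def bQ (L : IntLattice) (x y : Fin L.n → ℚ) : ℚ :=
  dotProduct x ((L.B.map (Int.cast : ℤ → ℚ)).mulVec y)

/-- The real extension of the bilinear form, on `ℝ^n = L ⊗ ℝ`. -/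
def bR (L : IntLattice) (x y : Fin L.n → ℝ) : ℝ :=
  dotProduct x ((L.B.map (Int.cast : ℤ → ℝ)).mulVec y)

/-- The lattice is even: `b(x,x)` is even for all `x`. -/
def IsEvenLat (L : IntLattice) : Prop := ∀ x, Even (L.bform x x)

/-- Nondegeneracy of the bilinear form. -/
def Nondeg (L : IntLattice) : Prop := L.B.det ≠ 0

/-- Symmetry of the Gram matrix. -/
def IsSymmLat (L : IntLattice) : Prop := L.B.IsSymm

/-- `ℤ ⊂ ℚ` as a `ℤ`-submodule of `ℚ`. -/
def intQ : Submodule ℤ ℚ := Submodule.span ℤ ({1} : Set ℚ)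

/-- The lattice `L = ℤ^n` sitting inside `ℚ^n = L ⊗ ℚ`. -/
def latt (L : IntLattice) : Submodule ℤ (Fin L.n → ℚ) :=
  Submodule.pi Set.univ fun _ => intQ

lemma bQ_add_left (L : IntLattice) (a b y : Fin L.n → ℚ) :
    L.bQ (a + b) y = L.bQ a y + L.bQ b y := add_dotProduct _ _ _

lemma bQ_smul_left (L : IntLattice) (c : ℤ) (a y : Fin L.n → ℚ) :
    L.bQ (c • a) y = c • L.bQ a y := smul_dotProduct _ _ _

lemma bQ_zero_left (L : IntLattice) (y : Fin L.n → ℚ) :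
    L.bQ 0 y = 0 := zero_dotProduct _

/-- The dual lattice `L♯ = {y ∈ L ⊗ ℚ : b(y,x) ∈ ℤ for all x ∈ L}`, inside `ℚ^n`. -/
def dual (L : IntLattice) : Submodule ℤ (Fin L.n → ℚ) where
  carrier := {y | ∀ x : Fin L.n → ℤ, L.bQ y (fun i => (x i : ℚ)) ∈ intQ}
  add_mem' := by
    intro a b ha hb
    simp only [Set.mem_setOf_eq] at *
    intro x
    rw [bQ_add_left]
    exact add_mem (ha x) (hb x)
  zero_mem' := by
    simp only [Set.mem_setOf_eq]
    intro x
    rw [bQ_zero_left]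
    exact zero_mem _
  smul_mem' := by
    intro c a ha
    simp only [Set.mem_setOf_eq] at *
    intro x
    rw [bQ_smul_left]
    exact Submodule.smul_mem _ _ (ha x)

/-- The discriminant group `discr L = L♯ / L`. -/
abbrev discrG (L : IntLattice) :=
  L.dual ⧸ Submodule.comap L.dual.subtype L.latt

/-- The discriminant quadratic form takes only integer values (mod 2ℤ) on the 2-torsion
subgroup of the discriminant group; phrased via representatives. -/
def EvenTwoTorsion (L : IntLattice) : Prop :=
  ∀ y ∈ L.dual, (2 : ℤ) • y ∈ L.latt → ∃ m : ℤ, L.bQ y y = (m : ℚ)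

/-- Two lattices are isometric: a `ℤ`-linear isomorphism preserving the forms. -/
def Isometric (L M : IntLattice) : Prop :=
  ∃ e : (Fin L.n → ℤ) ≃ₗ[ℤ] (Fin M.n → ℤ), ∀ x y, M.bform (e x) (e y) = L.bform x y

/-- `σ₋(L) = k`: some (hence any) real diagonalization of the form has exactly `k`
negative diagonal entries. -/
def negIndexEq (L : IntLattice) (k : ℕ) : Prop :=
  ∃ P : Matrix (Fin L.n) (Fin L.n) ℝ, IsUnit P.det ∧ ∃ d : Fin L.n → ℝ,
    P.transpose * (L.B.map (Int.cast : ℤ → ℝ)) * P = Matrix.diagonal d ∧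
    Nat.card {i : Fin L.n // d i < 0} = k

/-- A 2-root: a vector of square 2. -/
def IsTwoRoot (L : IntLattice) (v : Fin L.n → ℤ) : Prop := L.bform v v = 2

/-- A 6-root: a vector of square 6 with `3 ∣ b(v,x)` for all `x ∈ L`. -/
def IsSixRoot (L : IntLattice) (v : Fin L.n → ℤ) : Prop :=
  L.bform v v = 6 ∧ ∀ x, (3 : ℤ) ∣ L.bform v x

/-- A root: a 2-root or a 6-root. -/
def IsRoot (L : IntLattice) (v : Fin L.n → ℤ) : Prop := L.IsTwoRoot v ∨ L.IsSixRoot v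

/-- The set `{x ∈ L ⊗ ℝ : b(x,x) < 0, b(x,v) ≠ 0 for every root v}`. -/
def negCone (L : IntLattice) : Set (Fin L.n → ℝ) :=
  {x | L.bR x x < 0 ∧ ∀ v : Fin L.n → ℤ, L.IsRoot v → L.bR x (fun i => (v i : ℝ)) ≠ 0}

/-- The matrix of an endomorphism of `ℤ^n` in the standard basis. -/
def matOf (L : IntLattice) (g : (Fin L.n → ℤ) →ₗ[ℤ] (Fin L.n → ℤ)) :
    Matrix (Fin L.n) (Fin L.n) ℤ :=
  Matrix.of fun i j => g (Pi.single j 1) i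

/-- The real extension `g ⊗ ℝ` of an endomorphism `g` of the lattice. -/
def mapR (L : IntLattice) (g : (Fin L.n → ℤ) →ₗ[ℤ] (Fin L.n → ℤ)) :
    (Fin L.n → ℝ) → (Fin L.n → ℝ) :=
  fun x => ((L.matOf g).map (Int.cast : ℤ → ℝ)).mulVec x

/-- The rational extension `g ⊗ ℚ` of an endomorphism `g` of the lattice. -/
def mapQ (L : IntLattice) (g : (Fin L.n → ℤ) →ₗ[ℤ] (Fin L.n → ℤ)) :
    (Fin L.n → ℚ) → (Fin L.n → ℚ) :=
  fun x => ((L.matOf g).map (Int.cast : ℤ → ℚ)).mulVec x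

/-- `g` induces multiplication by `-1` on the 3-torsion subgroup of the discriminant
group; phrased via representatives. -/
def InducesNeg3 (L : IntLattice) (g : (Fin L.n → ℤ) →ₗ[ℤ] (Fin L.n → ℤ)) : Prop :=
  ∀ y ∈ L.dual, (3 : ℤ) • y ∈ L.latt → L.mapQ g y + y ∈ L.latt

/-- `g` induces the identity on the 3-torsion subgroup of the discriminant group;
phrased via representatives. -/
def InducesId3 (L : IntLattice) (g : (Fin L.n → ℤ) →ₗ[ℤ] (Fin L.n → ℤ)) : Prop :=
  ∀ y ∈ L.dual, (3 : ℤ) • y ∈ L.latt → L.mapQ g y - y ∈ L.latt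

/-- `g` is an isometry of `L`. -/
def IsIsometry (L : IntLattice) (g : (Fin L.n → ℤ) ≃ₗ[ℤ] (Fin L.n → ℤ)) : Prop :=
  ∀ x y, L.bform (g x) (g y) = L.bform x y

/-- Achirality: there are an isometry `g` of `L` and a connected component `C` of
`negCone L` such that `(g ⊗ ℝ)(C) = C` and `g` induces `-1` on the 3-torsion of the
discriminant group. -/
def Achiral (L : IntLattice) : Prop :=
  ∃ g : (Fin L.n → ℤ) ≃ₗ[ℤ] (Fin L.n → ℤ), L.IsIsometry g ∧
    (∃ x ∈ L.negCone,
      L.mapR g.toLinearMap '' connectedComponentIn L.negCone x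
        = connectedComponentIn L.negCone x) ∧
    L.InducesNeg3 g.toLinearMap

def Chiral (L : IntLattice) : Prop := ¬ L.Achiral

lemma bform_add_left (L : IntLattice) (a b y : Fin L.n → ℤ) :
    L.bform (a + b) y = L.bform a y + L.bform b y := add_dotProduct _ _ _

lemma bform_smul_left (L : IntLattice) (c : ℤ) (a y : Fin L.n → ℤ) :
    L.bform (c • a) y = c • L.bform a y := smul_dotProduct _ _ _

lemma bform_zero_left (L : IntLattice) (y : Fin L.n → ℤ) :
    L.bform 0 y = 0 := zero_dotProduct _

/-- The orthogonal complement of a sublattice. -/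
def ortho (L : IntLattice) (S : Submodule ℤ (Fin L.n → ℤ)) : Submodule ℤ (Fin L.n → ℤ) where
  carrier := {x | ∀ y ∈ S, L.bform x y = 0}
  add_mem' := by
    intro a b ha hb
    simp only [Set.mem_setOf_eq] at *
    intro y hy
    rw [bform_add_left, ha y hy, hb y hy]
    ring
  zero_mem' := by
    simp only [Set.mem_setOf_eq]
    intro y _
    exact bform_zero_left L y
  smul_mem' := by
    intro c a ha
    simp only [Set.mem_setOf_eq] at *
    intro y hy
    rw [bform_smul_left, ha y hy]
    simp
  
/-- A primitive sublattice: the quotient is torsion free. -/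
def IsPrimitive (L : IntLattice) (S : Submodule ℤ (Fin L.n → ℤ)) : Prop :=
  ∀ (x : Fin L.n → ℤ) (m : ℤ), m ≠ 0 → m • x ∈ S → x ∈ S

/-- A sublattice `S ⊂ L` (with the restricted form) is isometric to the lattice `M`. -/
def SubIsometric (L : IntLattice) (S : Submodule ℤ (Fin L.n → ℤ)) (M : IntLattice) : Prop :=
  ∃ e : S ≃ₗ[ℤ] (Fin M.n → ℤ), ∀ x y : S, M.bform (e x) (e y) = L.bform x y

/-! ### Concrete lattices -/

/-- The hyperbolic plane `U`. -/
def latU : IntLattice := ⟨2, !![0,1;1,0]⟩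

/-- The root lattice `A₁`. -/
def latA1 : IntLattice := ⟨1, !![2]⟩

/-- The root lattice `A₂`. -/
def latA2 : IntLattice := ⟨2, !![2,-1;-1,2]⟩

/-- The root lattice `D₄` (first vector is the central node). -/
def latD4 : IntLattice := ⟨4, !![2,-1,-1,-1;-1,2,0,0;-1,0,2,0;-1,0,0,2]⟩

/-- The root lattice `E₆`: chain `e₁,…,e₅`, with `e₆` attached to `e₃`. -/
def latE6 : IntLattice :=
  ⟨6, !![ 2,-1, 0, 0, 0, 0;
         -1, 2,-1, 0, 0, 0;
          0,-1, 2,-1, 0,-1;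
          0, 0,-1, 2,-1, 0;
          0, 0, 0,-1, 2, 0;
          0, 0,-1, 0, 0, 2]⟩

/-- The root lattice `E₈`: chain `e₁,…,e₇`, with `e₈` attached to `e₅`. -/
def latE8 : IntLattice :=
  ⟨8, !![ 2,-1, 0, 0, 0, 0, 0, 0;
         -1, 2,-1, 0, 0, 0, 0, 0;
          0,-1, 2,-1, 0, 0, 0, 0;
          0, 0,-1, 2,-1, 0, 0, 0;
          0, 0, 0,-1, 2,-1, 0,-1;
          0, 0, 0, 0,-1, 2,-1, 0;
          0, 0, 0, 0, 0,-1, 2, 0;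
          0, 0, 0, 0,-1, 0, 0, 2]⟩

/-- The rank one lattice `⟨k⟩`; in particular `−A₁ = ⟨-2⟩`. -/
def latGen (k : ℤ) : IntLattice := ⟨1, !![k]⟩

/-- `L(c)`: the lattice `L` with its form multiplied by `c`. -/
def twist (c : ℤ) (L : IntLattice) : IntLattice := ⟨L.n, c • L.B⟩

/-- Orthogonal direct sum of two lattices. -/
def dsum (L M : IntLattice) : IntLattice :=
  ⟨L.n + M.n,
    Matrix.submatrix (Matrix.fromBlocks L.B 0 0 M.B) finSumFinEquiv.symm finSumFinEquiv.symm⟩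

instance : Add IntLattice := ⟨dsum⟩

/-- Orthogonal direct sum of `t` copies of a lattice. -/
def rep : ℕ → IntLattice → IntLattice
  | 0, _ => ⟨0, 0⟩
  | (k+1), L => rep k L + L

end IntLattice

section Aux

open IntLattice Matrix

/-- In a group of order 3, any nonzero element generates. -/
theorem gen3 {G : Type*} [AddCommGroup G] (hG : Nat.card G = 3) (a : G) (ha : a ≠ 0)
    (x : G) : ∃ m : ℤ, m • a = x := by
  have hfin : Finite G := Nat.finite_of_card_ne_zero (by omega)
  have hdvd : addOrderOf a ∣ 3 := hG ▸ addOrderOf_dvd_natCard a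
  have hne : addOrderOf a ≠ 1 := fun h1 => ha (AddMonoid.addOrderOf_eq_one_iff.mp h1)
  have h3 : addOrderOf a = 3 := by
    rcases (Nat.Prime.eq_one_or_self_of_dvd (by norm_num) _ hdvd) with h | h <;> omega
  have hcard : Nat.card (AddSubgroup.zmultiples a) = Nat.card G := by
    rw [Nat.card_zmultiples, h3, hG]
  have htop := AddSubgroup.eq_top_of_card_eq _ hcard
  have : x ∈ AddSubgroup.zmultiples a := htop ▸ AddSubgroup.mem_top x
  exact AddSubgroup.mem_zmultiples_iff.mp this

theorem mem_intQ_iff {q : ℚ} : q ∈ intQ ↔ ∃ m : ℤ, q = (m : ℚ) := by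
  rw [intQ, Submodule.mem_span_singleton]
  constructor
  · rintro ⟨m, hm⟩; exact ⟨m, by rw [← hm]; simp⟩
  · rintro ⟨m, hm⟩; exact ⟨m, by rw [hm]; simp⟩

theorem mem_latt_iff {L : IntLattice} {y : Fin L.n → ℚ} :
    y ∈ L.latt ↔ ∀ i, ∃ m : ℤ, y i = (m : ℚ) := by
  rw [latt, Submodule.mem_pi]
  constructor
  · intro h i; exact mem_intQ_iff.mp (h i trivial)
  · intro h i _; exact mem_intQ_iff.mpr (h i)

theorem cast_mem_latt (L : IntLattice) (x : Fin L.n → ℤ) :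
    (fun i => (x i : ℚ)) ∈ L.latt := mem_latt_iff.mpr (fun i => ⟨x i, rfl⟩)

theorem bQ_cast (L : IntLattice) (a b : Fin L.n → ℤ) :
    L.bQ (fun i => (a i : ℚ)) (fun i => (b i : ℚ)) = (L.bform a b : ℚ) := by
  simp only [bQ, bform, dotProduct, Matrix.mulVec, Matrix.map_apply]
  push_cast
  rfl

theorem bQ_smul_left' (L : IntLattice) (c : ℚ) (a y : Fin L.n → ℚ) :
    L.bQ (c • a) y = c * L.bQ a y := smul_dotProduct _ _ _

theorem bQ_smul_right' (L : IntLattice) (c : ℚ) (a y : Fin L.n → ℚ) :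
    L.bQ a (c • y) = c * L.bQ a y := by
  rw [bQ, Matrix.mulVec_smul, dotProduct_smul]; rfl

theorem bQ_zero_right (L : IntLattice) (y : Fin L.n → ℚ) : L.bQ y 0 = 0 := by
  rw [bQ, Matrix.mulVec_zero, dotProduct_zero]

theorem bform_smul_right (L : IntLattice) (c : ℤ) (a y : Fin L.n → ℤ) :
    L.bform a (c • y) = c • L.bform a y := by
  rw [bform, Matrix.mulVec_smul, dotProduct_smul]; rfl

lemma dsum_form {n1 n2 : ℕ} {R : Type*} [CommRing R]
    (B1 : Matrix (Fin n1) (Fin n1) R) (B2 : Matrix (Fin n2) (Fin n2) R)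
    (x y : Fin (n1+n2) → R) :
    dotProduct x
      (((Matrix.fromBlocks B1 0 0 B2).submatrix ⇑finSumFinEquiv.symm ⇑finSumFinEquiv.symm).mulVec y)
    = dotProduct (x ∘ Fin.castAdd n2) (B1.mulVec (y ∘ Fin.castAdd n2))
      + dotProduct (x ∘ Fin.natAdd n1) (B2.mulVec (y ∘ Fin.natAdd n1)) := by
  rw [Matrix.submatrix_mulVec_equiv]
  have hx : x ∘ ⇑(finSumFinEquiv.symm).symm = Sum.elim (x ∘ Fin.castAdd n2) (x ∘ Fin.natAdd n1) := by
    funext i; cases i <;> rfl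
  have hy : y ∘ ⇑(finSumFinEquiv.symm).symm = Sum.elim (y ∘ Fin.castAdd n2) (y ∘ Fin.natAdd n1) := by
    funext i; cases i <;> rfl
  have key : ∀ u : Fin n1 ⊕ Fin n2 → R,
      dotProduct x (u ∘ ⇑finSumFinEquiv.symm)
      = dotProduct (x ∘ ⇑(finSumFinEquiv.symm).symm) u := by
    intro u
    simp only [dotProduct, Function.comp]
    exact Fintype.sum_equiv finSumFinEquiv.symm _ _ (fun i => by simp)
  rw [key, hx, hy, Matrix.fromBlocks_mulVec]
  simp [sumElim_dotProduct_sumElim]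

theorem bQ_dsum (L1 L2 : IntLattice) (x y : Fin (L1 + L2).n → ℚ) :
    (L1 + L2).bQ x y = L1.bQ (x ∘ Fin.castAdd L2.n) (y ∘ Fin.castAdd L2.n)
      + L2.bQ (x ∘ Fin.natAdd L1.n) (y ∘ Fin.natAdd L1.n) := by
  have hB : (L1 + L2).B = Matrix.submatrix (Matrix.fromBlocks L1.B 0 0 L2.B)
      ⇑finSumFinEquiv.symm ⇑finSumFinEquiv.symm := rfl
  have hmap : (L1 + L2).B.map (Int.cast : ℤ → ℚ)
      = Matrix.submatrix (Matrix.fromBlocks (L1.B.map (Int.cast : ℤ → ℚ)) 0 0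
          (L2.B.map (Int.cast : ℤ → ℚ))) ⇑finSumFinEquiv.symm ⇑finSumFinEquiv.symm := by
    change (Matrix.submatrix (Matrix.fromBlocks L1.B 0 0 L2.B) ⇑finSumFinEquiv.symm
      ⇑finSumFinEquiv.symm).map (Int.cast : ℤ → ℚ) = _
    rw [← Matrix.submatrix_map, Matrix.fromBlocks_map]
    congr 1
  rw [bQ, hmap]
  exact dsum_form _ _ x y

theorem mem_latt_dsum {L1 L2 : IntLattice} {x : Fin (L1 + L2).n → ℚ} :
    x ∈ (L1 + L2).latt ↔
      (x ∘ Fin.castAdd L2.n) ∈ L1.latt ∧ (x ∘ Fin.natAdd L1.n) ∈ L2.latt := by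
  simp only [mem_latt_iff]
  constructor
  · intro h; exact ⟨fun i => h _, fun i => h _⟩
  · rintro ⟨h1, h2⟩ i
    refine Fin.addCases (fun j => ?_) (fun j => ?_) i
    · exact h1 j
    · exact h2 j

theorem mem_dual_dsum {L1 L2 : IntLattice} {y : Fin (L1 + L2).n → ℚ} :
    y ∈ (L1 + L2).dual ↔
      (y ∘ Fin.castAdd L2.n) ∈ L1.dual ∧ (y ∘ Fin.natAdd L1.n) ∈ L2.dual := by
  constructor
  · intro h
    constructor
    · intro x
      have h0 := h (Fin.addCases x 0)
      rw [bQ_dsum] at h0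
      have e1 : (((fun i => ((Fin.addCases x 0 i : ℤ) : ℚ)) : Fin (L1 + L2).n → ℚ) ∘ Fin.castAdd L2.n)
          = fun i => (x i : ℚ) := funext fun i => by
            show ((Fin.addCases _ _ _ : ℤ) : ℚ) = _; simp
      have e2 : (((fun i => ((Fin.addCases x 0 i : ℤ) : ℚ)) : Fin (L1 + L2).n → ℚ) ∘ Fin.natAdd L1.n)
          = fun _ : Fin L2.n => (0:ℚ) := funext fun i => by
            show ((Fin.addCases _ _ _ : ℤ) : ℚ) = _; simp
      erw [e1, e2] at h0
      have hz : (fun _ : Fin L2.n => (0:ℚ)) = (0 : Fin L2.n → ℚ) := rfl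
      rw [hz, bQ_zero_right, add_zero] at h0
      simpa only [Function.comp_def] using h0
    · intro x
      have h0 := h (Fin.addCases 0 x)
      rw [bQ_dsum] at h0
      have e1 : (((fun i => ((Fin.addCases 0 x i : ℤ) : ℚ)) : Fin (L1 + L2).n → ℚ) ∘ Fin.castAdd L2.n)
          = fun _ : Fin L1.n => (0:ℚ) := funext fun i => by
            show ((Fin.addCases _ _ _ : ℤ) : ℚ) = _; simp
      have e2 : (((fun i => ((Fin.addCases 0 x i : ℤ) : ℚ)) : Fin (L1 + L2).n → ℚ) ∘ Fin.natAdd L1.n)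
          = fun i => (x i : ℚ) := funext fun i => by
            show ((Fin.addCases _ _ _ : ℤ) : ℚ) = _; simp
      erw [e1, e2] at h0
      have hz : (fun _ : Fin L1.n => (0:ℚ)) = (0 : Fin L1.n → ℚ) := rfl
      rw [hz, bQ_zero_right, zero_add] at h0
      simpa only [Function.comp_def] using h0
  · rintro ⟨h1, h2⟩ x
    rw [bQ_dsum]
    have e1 : ((fun i => ((x i : ℚ))) ∘ Fin.castAdd L2.n)
        = fun i => ((x (Fin.castAdd L2.n i) : ℚ)) := rfl
    have e2 : ((fun i => ((x i : ℚ))) ∘ Fin.natAdd L1.n)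
        = fun i => ((x (Fin.natAdd L1.n i) : ℚ)) := rfl
    rw [e1, e2]
    exact add_mem (h1 _) (h2 _)

theorem matOf_mulVec (L : IntLattice) (g : (Fin L.n → ℤ) →ₗ[ℤ] (Fin L.n → ℤ))
    (x : Fin L.n → ℤ) : (L.matOf g).mulVec x = g x := by
  have h : L.matOf g = LinearMap.toMatrix' g := by
    ext i j
    have hs : (Pi.single j 1 : Fin L.n → ℤ) = fun j' => if j' = j then 1 else 0 := by
      funext j'; simp [Pi.single_apply]
    rw [LinearMap.toMatrix'_apply, matOf, Matrix.of_apply, hs]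
  rw [h, ← Matrix.toLin'_apply, Matrix.toLin'_toMatrix']

theorem mapQ_cast (L : IntLattice) (g : (Fin L.n → ℤ) →ₗ[ℤ] (Fin L.n → ℤ))
    (x : Fin L.n → ℤ) :
    L.mapQ g (fun i => (x i : ℚ)) = fun i => ((g x) i : ℚ) := by
  funext i
  rw [← matOf_mulVec L g x]
  simp only [mapQ, Matrix.mulVec, dotProduct, Matrix.map_apply]
  push_cast
  rfl

theorem mapQ_mem_latt (L : IntLattice) (g : (Fin L.n → ℤ) →ₗ[ℤ] (Fin L.n → ℤ))
    {z : Fin L.n → ℚ} (hz : z ∈ L.latt) : L.mapQ g z ∈ L.latt := by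
  have h := mem_latt_iff.mp hz
  choose m hm using h
  have hz' : z = fun i => (m i : ℚ) := funext hm
  rw [hz', mapQ_cast]
  exact cast_mem_latt L _

theorem mapQ_sub (L : IntLattice) (g : (Fin L.n → ℤ) →ₗ[ℤ] (Fin L.n → ℤ))
    (a b : Fin L.n → ℚ) : L.mapQ g (a - b) = L.mapQ g a - L.mapQ g b := by
  simp only [mapQ]; rw [Matrix.mulVec_sub]

theorem mapQ_smul (L : IntLattice) (g : (Fin L.n → ℤ) →ₗ[ℤ] (Fin L.n → ℤ))
    (c : ℤ) (a : Fin L.n → ℚ) : L.mapQ g (c • a) = c • L.mapQ g a := by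
  simp only [mapQ]; rw [Matrix.mulVec_smul]

/-- Translate the 2-torsion hypothesis to representatives. -/
theorem two_torsion_rep {L : IntLattice} (h : ∀ x : L.discrG, (2 : ℤ) • x = 0)
    {y : Fin L.n → ℚ} (hy : y ∈ L.dual) : (2 : ℤ) • y ∈ L.latt := by
  have h2 := h (Submodule.Quotient.mk ⟨y, hy⟩)
  rw [← Submodule.Quotient.mk_smul, Submodule.Quotient.mk_eq_zero] at h2
  simpa [Submodule.mem_comap] using h2

theorem dual_tors3_mem_latt {L : IntLattice} (h : ∀ x : L.discrG, (2 : ℤ) • x = 0)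
    {y : Fin L.n → ℚ} (hy : y ∈ L.dual) (h3 : (3 : ℤ) • y ∈ L.latt) : y ∈ L.latt := by
  have h2 := two_torsion_rep h hy
  have : y = (3 : ℤ) • y - (2 : ℤ) • y := by
    funext i; simp; ring
  rw [this]
  exact sub_mem h3 h2

/-- All 3-torsion of discr L1 is a multiple of a given nonzero 3-torsion class. -/
theorem key31 {L : IntLattice} (h31 : Nat.card (Submodule.torsionBy ℤ L.discrG 3) = 3)
    {a : Fin L.n → ℚ} (ha : a ∈ L.dual) (ha3 : (3 : ℤ) • a ∈ L.latt) (hanl : a ∉ L.latt)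
    {y : Fin L.n → ℚ} (hy : y ∈ L.dual) (hy3 : (3 : ℤ) • y ∈ L.latt) :
    ∃ m : ℤ, y - m • a ∈ L.latt := by
  set K := Submodule.comap L.dual.subtype L.latt with hK
  have tors : ∀ (z : Fin L.n → ℚ) (hz : z ∈ L.dual), (3:ℤ) • z ∈ L.latt →
      (Submodule.Quotient.mk (⟨z, hz⟩ : L.dual) : L.discrG) ∈
        Submodule.torsionBy ℤ L.discrG 3 := by
    intro z hz hz3
    rw [Submodule.mem_torsionBy_iff, ← Submodule.Quotient.mk_smul,
      Submodule.Quotient.mk_eq_zero]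
    simpa [Submodule.mem_comap] using hz3
  set A : Submodule.torsionBy ℤ L.discrG 3 :=
    ⟨Submodule.Quotient.mk ⟨a, ha⟩, tors a ha ha3⟩ with hA
  set Y : Submodule.torsionBy ℤ L.discrG 3 :=
    ⟨Submodule.Quotient.mk ⟨y, hy⟩, tors y hy hy3⟩ with hY
  have hAne : A ≠ 0 := by
    intro h0
    apply hanl
    have : (Submodule.Quotient.mk (⟨a, ha⟩ : L.dual) : L.discrG) = 0 := by
      simpa [hA] using congrArg Subtype.val h0
    rw [Submodule.Quotient.mk_eq_zero] at this
    simpa [Submodule.mem_comap] using this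
  obtain ⟨m, hm⟩ := gen3 h31 A hAne Y
  refine ⟨m, ?_⟩
  have hm' : m • (Submodule.Quotient.mk (⟨a, ha⟩ : L.dual) : L.discrG)
      = Submodule.Quotient.mk ⟨y, hy⟩ := by
    simpa [hA, hY] using congrArg Subtype.val hm
  have : (Submodule.Quotient.mk ((⟨y, hy⟩ : L.dual) - m • ⟨a, ha⟩) : L.discrG) = 0 := by
    rw [Submodule.Quotient.mk_sub, Submodule.Quotient.mk_smul, hm', sub_self]
  rw [Submodule.Quotient.mk_eq_zero] at this
  simpa [Submodule.mem_comap] using this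

end Aux

section Aux2
open IntLattice

theorem mapQ_qsmul (L : IntLattice) (g : (Fin L.n → ℤ) →ₗ[ℤ] (Fin L.n → ℤ))
    (c : ℚ) (a : Fin L.n → ℚ) : L.mapQ g (c • a) = c • L.mapQ g a := by
  simp only [IntLattice.mapQ]; rw [Matrix.mulVec_smul]

theorem no_div3_root (L : IntLattice) (w : Fin L.n → ℤ) (hw : L.bform w w = 6)
    (h : ∀ i, ∃ m : ℤ, ((w i : ℚ)) = 3 * m) : False := by
  choose u hu using h
  have hw3 : w = (3:ℤ) • u := funext fun i => by exact_mod_cast hu i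
  rw [hw3, IntLattice.bform_smul_left, bform_smul_right, smul_eq_mul, smul_eq_mul] at hw
  omega

end Aux2

open IntLattice in
/-- recognizing ℤ/3-direct and ℤ/3-reversing isometries via a 6-root. -/
theorem statement_1 (L1 L2 : IntLattice)
    (hsymm1 : L1.IsSymmLat) (hsymm2 : L2.IsSymmLat)
    (hnd1 : L1.Nondeg) (hnd2 : L2.Nondeg)
    (heven1 : L1.IsEvenLat) (heven2 : L2.IsEvenLat)
    (h31 : Nat.card (Submodule.torsionBy ℤ L1.discrG 3) = 3)
    (h22 : ∀ x : L2.discrG, (2 : ℤ) • x = 0)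
    (g : (Fin (L1 + L2).n → ℤ) ≃ₗ[ℤ] (Fin (L1 + L2).n → ℤ))
    (hg : (L1 + L2).IsIsometry g)
    (v : Fin (L1 + L2).n → ℤ)
    (hv : (L1 + L2).IsSixRoot v) :
    ((∀ i : Fin L1.n,
        (3 : ℤ) ∣ (g v (Fin.castAdd L2.n i) - v (Fin.castAdd L2.n i))) →
      (L1 + L2).InducesId3 g.toLinearMap) ∧
    ((¬ ∀ i : Fin (L1 + L2).n, (3 : ℤ) ∣ (g v i - v i)) →
      (L1 + L2).InducesNeg3 g.toLinearMap) := by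
  classical
  set vQc : Fin (L1 + L2).n → ℚ := fun i => (v i : ℚ) with hvQc
  set gvQc : Fin (L1 + L2).n → ℚ := fun i => ((g v) i : ℚ) with hgvQc
  set vQ : Fin (L1 + L2).n → ℚ := (3:ℚ)⁻¹ • vQc with hvQdef
  set gvQ : Fin (L1 + L2).n → ℚ := (3:ℚ)⁻¹ • gvQc with hgvQdef
  have hbvv : (L1 + L2).bform v v = 6 := hv.1
  have hdvd : ∀ x, (3:ℤ) ∣ (L1 + L2).bform v x := hv.2
  have hbgvv : (L1 + L2).bform (g v) (g v) = 6 := by rw [hg v v]; exact hbvv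
  have hgv_dvd : ∀ x, (3:ℤ) ∣ (L1 + L2).bform (g v) x := by
    intro x
    have hx : x = g (g.symm x) := (g.apply_symm_apply x).symm
    rw [hx, hg v (g.symm x)]
    exact hdvd _
  have hcast_v : (3:ℤ) • vQ = vQc := by
    funext i
    show (3:ℤ) • ((3:ℚ)⁻¹ * vQc i) = vQc i
    rw [zsmul_eq_mul]; push_cast; ring
  have hcast_gv : (3:ℤ) • gvQ = gvQc := by
    funext i
    show (3:ℤ) • ((3:ℚ)⁻¹ * gvQc i) = gvQc i
    rw [zsmul_eq_mul]; push_cast; ring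
  have hvQdual : vQ ∈ (L1 + L2).dual := by
    intro x
    rw [hvQdef, bQ_smul_left', hvQc, bQ_cast]
    obtain ⟨k, hk⟩ := hdvd x
    rw [hk]
    exact mem_intQ_iff.mpr ⟨k, by push_cast; ring⟩
  have hgvQdual : gvQ ∈ (L1 + L2).dual := by
    intro x
    rw [hgvQdef, bQ_smul_left', hgvQc, bQ_cast]
    obtain ⟨k, hk⟩ := hgv_dvd x
    rw [hk]
    exact mem_intQ_iff.mpr ⟨k, by push_cast; ring⟩
  have h3vQ : (3:ℤ) • vQ ∈ (L1 + L2).latt := by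
    rw [hcast_v, hvQc]; exact cast_mem_latt (L1 + L2) v
  have h3gvQ : (3:ℤ) • gvQ ∈ (L1 + L2).latt := by
    rw [hcast_gv, hgvQc]; exact cast_mem_latt (L1 + L2) (g v)
  have hsplitd := mem_dual_dsum.mp hvQdual
  have h3split := mem_latt_dsum.mp h3vQ
  have h3v1 : (3:ℤ) • (vQ ∘ Fin.castAdd L2.n) ∈ L1.latt := h3split.1
  have h3v2 : (3:ℤ) • (vQ ∘ Fin.natAdd L1.n) ∈ L2.latt := h3split.2
  have hv2latt : vQ ∘ Fin.natAdd L1.n ∈ L2.latt :=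
    dual_tors3_mem_latt h22 hsplitd.2 h3v2
  have hvnot : vQ ∉ (L1 + L2).latt := by
    intro hl
    refine no_div3_root (L1 + L2) v hbvv (fun i => ?_)
    obtain ⟨m, hm⟩ := mem_latt_iff.mp hl i
    refine ⟨m, ?_⟩
    have : (3:ℚ)⁻¹ * (v i : ℚ) = m := hm
    linarith
  have hv1not : vQ ∘ Fin.castAdd L2.n ∉ L1.latt :=
    fun h1 => hvnot (mem_latt_dsum.mpr ⟨h1, hv2latt⟩)
  have decomp : ∀ y ∈ (L1 + L2).dual, (3:ℤ) • y ∈ (L1 + L2).latt →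
      ∃ m : ℤ, y - m • vQ ∈ (L1 + L2).latt := by
    intro y hy h3y
    obtain ⟨hy1, hy2⟩ := mem_dual_dsum.mp hy
    obtain ⟨h3y1, h3y2⟩ := mem_latt_dsum.mp h3y
    have h3y1' : (3:ℤ) • (y ∘ Fin.castAdd L2.n) ∈ L1.latt := h3y1
    have h3y2' : (3:ℤ) • (y ∘ Fin.natAdd L1.n) ∈ L2.latt := h3y2
    have hy2l : y ∘ Fin.natAdd L1.n ∈ L2.latt := dual_tors3_mem_latt h22 hy2 h3y2'
    obtain ⟨m, hm⟩ := key31 h31 hsplitd.1 h3v1 hv1not hy1 h3y1'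
    refine ⟨m, mem_latt_dsum.mpr ⟨?_, ?_⟩⟩
    · exact hm
    · exact sub_mem hy2l (Submodule.smul_mem _ m hv2latt)
  have hmap1 : (L1 + L2).mapQ g.toLinearMap vQ = gvQ := by
    rw [hvQdef, mapQ_qsmul, hvQc, mapQ_cast, hgvQdef, hgvQc]
    rfl
  constructor
  · -- part (i)
    intro h1
    have hId : gvQ - vQ ∈ (L1 + L2).latt := by
      refine mem_latt_dsum.mpr ⟨?_, ?_⟩
      · rw [mem_latt_iff]
        intro i
        obtain ⟨k, hk⟩ := h1 i
        refine ⟨k, ?_⟩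
        show (3:ℚ)⁻¹ * (g v (Fin.castAdd L2.n i) : ℚ)
            - (3:ℚ)⁻¹ * (v (Fin.castAdd L2.n i) : ℚ) = (k : ℚ)
        have hq : ((g v (Fin.castAdd L2.n i) : ℚ)) - (v (Fin.castAdd L2.n i) : ℚ)
            = 3 * (k : ℚ) := by exact_mod_cast hk
        linarith
      · have hd : gvQ - vQ ∈ (L1 + L2).dual := sub_mem hgvQdual hvQdual
        have h3 : (3:ℤ) • (gvQ - vQ) ∈ (L1 + L2).latt := by
          rw [smul_sub, hcast_v, hcast_gv]
          exact sub_mem (hgvQc ▸ cast_mem_latt (L1 + L2) (g v))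
            (hvQc ▸ cast_mem_latt (L1 + L2) v)
        have h3' : (3:ℤ) • ((gvQ - vQ) ∘ Fin.natAdd L1.n) ∈ L2.latt :=
          (mem_latt_dsum.mp h3).2
        exact dual_tors3_mem_latt h22 (mem_dual_dsum.mp hd).2 h3'
    intro y hy h3y
    obtain ⟨m, hm⟩ := decomp y hy h3y
    have key : (L1 + L2).mapQ g.toLinearMap y - y
        = (L1 + L2).mapQ g.toLinearMap (y - m • vQ) + m • (gvQ - vQ) + (-(y - m • vQ)) := by
      rw [mapQ_sub, mapQ_smul, hmap1, smul_sub]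
      abel
    rw [key]
    exact add_mem (add_mem (mapQ_mem_latt _ _ hm) (Submodule.smul_mem _ _ hId)) (neg_mem hm)
  · -- part (ii)
    intro h2
    obtain ⟨m, hm⟩ := decomp gvQ hgvQdual h3gvQ
    have hmul3 : ∀ k : ℤ, (3 * k : ℤ) • vQ ∈ (L1 + L2).latt := by
      intro k
      rw [mul_comm, mul_smul]
      exact Submodule.smul_mem _ k h3vQ
    have hNeg : gvQ + vQ ∈ (L1 + L2).latt := by
      have hr : m % 3 = 0 ∨ m % 3 = 1 ∨ m % 3 = 2 := by omega
      have hms : m = 3 * (m / 3) + m % 3 := (Int.mul_ediv_add_emod m 3).symm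
      rcases hr with h0 | h1' | h2'
      · exfalso
        have hgl : gvQ ∈ (L1 + L2).latt := by
          have : gvQ = (gvQ - m • vQ) + m • vQ := by abel
          rw [this]
          refine add_mem hm ?_
          have : m = 3 * (m / 3) := by omega
          rw [this]
          exact hmul3 _
        refine no_div3_root (L1 + L2) (g v) hbgvv (fun i => ?_)
        obtain ⟨k, hk⟩ := mem_latt_iff.mp hgl i
        refine ⟨k, ?_⟩
        have : (3:ℚ)⁻¹ * (g v i : ℚ) = k := hk
        linarith
      · exfalso
        apply h2
        intro i
        have hsub : gvQ - vQ ∈ (L1 + L2).latt := by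
          have e : gvQ - vQ = (gvQ - m • vQ) + (m - 1) • vQ := by
            rw [sub_smul, one_smul]; abel
          rw [e]
          refine add_mem hm ?_
          have : m - 1 = 3 * ((m - 1) / 3) := by omega
          rw [this]
          exact hmul3 _
        obtain ⟨k, hk⟩ := mem_latt_iff.mp hsub i
        have hk' : (3:ℚ)⁻¹ * (g v i : ℚ) - (3:ℚ)⁻¹ * (v i : ℚ) = k := hk
        refine ⟨k, ?_⟩
        have : ((g v i : ℚ)) - (v i : ℚ) = 3 * k := by linarith
        exact_mod_cast this
      · have e : gvQ + vQ = (gvQ - m • vQ) + (m + 1) • vQ := by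
          rw [add_smul, one_smul]; abel
        rw [e]
        refine add_mem hm ?_
        have : m + 1 = 3 * ((m + 1) / 3) := by omega
        rw [this]
        exact hmul3 _
    intro y hy h3y
    obtain ⟨m', hm'⟩ := decomp y hy h3y
    have key : (L1 + L2).mapQ g.toLinearMap y + y
        = (L1 + L2).mapQ g.toLinearMap (y - m' • vQ) + m' • (gvQ + vQ) + (y - m' • vQ) := by
      rw [mapQ_sub, mapQ_smul, hmap1, smul_add]
      abel
    rw [key]
    exact add_mem (add_mem (mapQ_mem_latt _ _ hm') (Submodule.smul_mem _ _ hNeg)) hm'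
end

section
/- Let L_h be an achiral lattice (an even lattice of signature (n,1) whose discriminant group has 3-torsion subgroup of order 3, admitting an achirality witness as in the definition), and let L_e be an even positive definite lattice that is generated over ℤ by its vectors of square 2 and whose discriminant group is annihilated by 2. Then the orthogonal direct sum L = L_e + L_h is achiral. -/
attribute [reducible] IntLattice.dsum
namespace IntLattice
set_option linter.unusedSectionVars false

open Matrix

section Glue
variable {R : Type*} [CommRing R] {a b : ℕ}

/-- Glue a pair of vectors into a vector on `Fin (a+b)`. -/
def glue (p : (Fin a → R) × (Fin b → R)) : Fin (a + b) → R :=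
  fun i => Sum.elim p.1 p.2 (finSumFinEquiv.symm i)

def spl (x : Fin (a + b) → R) : (Fin a → R) × (Fin b → R) :=
  (fun i => x (finSumFinEquiv (Sum.inl i)), fun j => x (finSumFinEquiv (Sum.inr j)))

lemma glue_comp_e (p : (Fin a → R) × (Fin b → R)) (s : Fin a ⊕ Fin b) :
    glue p (finSumFinEquiv s) = Sum.elim p.1 p.2 s := by
  simp [glue]

lemma glue_castAdd (p : (Fin a → R) × (Fin b → R)) (i : Fin a) :
    glue p (Fin.castAdd b i) = p.1 i := by
  simpa using glue_comp_e p (Sum.inl i)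

lemma glue_natAdd (p : (Fin a → R) × (Fin b → R)) (j : Fin b) :
    glue p (Fin.natAdd a j) = p.2 j := by
  simpa using glue_comp_e p (Sum.inr j)

lemma glue_spl (x : Fin (a + b) → R) : glue (spl x) = x := by
  funext i
  rw [← finSumFinEquiv.apply_symm_apply i]
  rcases finSumFinEquiv.symm i with s | s <;> simp [spl, glue_castAdd, glue_natAdd]

lemma spl_glue (p : (Fin a → R) × (Fin b → R)) : spl (glue p) = p := by
  ext i <;> simp [spl, glue]

lemma glue_add (p q : (Fin a → R) × (Fin b → R)) :
    glue p + glue q = glue (p + q) := by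
  funext i
  simp only [glue, Pi.add_apply]
  rcases finSumFinEquiv.symm i with s | s <;> simp

lemma glue_map {S : Type*} [CommRing S] (f : R → S) (p : (Fin a → R) × (Fin b → R)) :
    (fun i => f (glue p i)) = glue (fun i => f (p.1 i), fun j => f (p.2 j)) := by
  funext i
  simp only [glue]
  rcases finSumFinEquiv.symm i with s | s <;> simp

lemma dot_glue (u w : (Fin a → R) × (Fin b → R)) :
    dotProduct (glue u) (glue w) = dotProduct u.1 w.1 + dotProduct u.2 w.2 := by
  rw [dotProduct, ← Equiv.sum_comp finSumFinEquiv, Fintype.sum_sum_type]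
  simp [glue_castAdd, glue_natAdd, dotProduct]

lemma block_mulVec (M1 : Matrix (Fin a) (Fin a) R) (M2 : Matrix (Fin b) (Fin b) R)
    (p : (Fin a → R) × (Fin b → R)) :
    (Matrix.submatrix (Matrix.fromBlocks M1 0 0 M2) finSumFinEquiv.symm finSumFinEquiv.symm).mulVec
      (glue p) = glue (M1.mulVec p.1, M2.mulVec p.2) := by
  rw [Matrix.submatrix_mulVec_equiv]
  have h1 : glue p ∘ finSumFinEquiv.symm.symm = Sum.elim p.1 p.2 := by
    funext s; simpa using glue_comp_e p s
  rw [h1, Matrix.fromBlocks_mulVec]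
  funext i
  simp only [glue, Function.comp_apply]
  rcases finSumFinEquiv.symm i with s | s <;> simp

end Glue

end IntLattice
namespace IntLattice

open Matrix

section Cast
variable {S : Type*} [CommRing S] {k l : ℕ}

lemma cast_mulVec (A : Matrix (Fin k) (Fin l) ℤ) (v : Fin l → ℤ) :
    (fun i => (((A.mulVec v) i : ℤ) : S)) = (A.map (Int.cast : ℤ → S)).mulVec
      (fun i => ((v i : ℤ) : S)) := by
  funext i
  simp [Matrix.mulVec, dotProduct, Matrix.map_apply]

lemma cast_form (L : IntLattice) (x y : Fin L.n → ℤ) :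
    dotProduct (fun i => ((x i : ℤ) : S))
      ((L.B.map (Int.cast : ℤ → S)).mulVec (fun i => ((y i : ℤ) : S)))
      = ((L.bform x y : ℤ) : S) := by
  simp [bform, Matrix.mulVec, dotProduct, Matrix.map_apply, Finset.mul_sum]

lemma bR_cast (L : IntLattice) (x y : Fin L.n → ℤ) :
    L.bR (fun i => (x i : ℝ)) (fun i => (y i : ℝ)) = ((L.bform x y : ℤ) : ℝ) :=
  cast_form L x y

lemma bQ_cast (L : IntLattice) (x y : Fin L.n → ℤ) :
    L.bQ (fun i => (x i : ℚ)) (fun i => (y i : ℚ)) = ((L.bform x y : ℤ) : ℚ) :=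
  cast_form L x y

end Cast

section DSumB

variable (L M : IntLattice)

lemma dsum_B : (L + M).B =
    (Matrix.fromBlocks L.B 0 0 M.B).submatrix finSumFinEquiv.symm finSumFinEquiv.symm := rfl

lemma dsum_B_map {S : Type*} [CommRing S] (f : ℤ → S) (hf : f 0 = 0) :
    ((L + M).B).map f =
      (Matrix.fromBlocks (L.B.map f) 0 0 (M.B.map f)).submatrix
        finSumFinEquiv.symm finSumFinEquiv.symm := by
  rw [dsum_B]
  ext i j
  rcases h1 : finSumFinEquiv.symm i with s | s <;> rcases h2 : finSumFinEquiv.symm j with t | t <;>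
    simp [Matrix.map_apply, Matrix.submatrix_apply, h1, h2, hf]

lemma bform_glue (p q : (Fin L.n → ℤ) × (Fin M.n → ℤ)) :
    (L + M).bform (glue p) (glue q) = L.bform p.1 q.1 + M.bform p.2 q.2 := by
  show dotProduct (glue p) (((L+M).B).mulVec (glue q)) = _
  rw [dsum_B, block_mulVec, dot_glue]
  rfl

lemma bQ_glue (p q : (Fin L.n → ℚ) × (Fin M.n → ℚ)) :
    (L + M).bQ (glue p) (glue q) = L.bQ p.1 q.1 + M.bQ p.2 q.2 := by
  show dotProduct (glue p) ((((L+M).B).map _).mulVec (glue q)) = _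
  rw [dsum_B_map L M _ (by simp), block_mulVec, dot_glue]
  rfl

lemma bR_glue (p q : (Fin L.n → ℝ) × (Fin M.n → ℝ)) :
    (L + M).bR (glue p) (glue q) = L.bR p.1 q.1 + M.bR p.2 q.2 := by
  show dotProduct (glue p) ((((L+M).B).map _).mulVec (glue q)) = _
  rw [dsum_B_map L M _ (by simp), block_mulVec, dot_glue]
  rfl

lemma glue_mem_latt (p : (Fin L.n → ℚ) × (Fin M.n → ℚ)) :
    glue p ∈ (L + M).latt ↔ p.1 ∈ L.latt ∧ p.2 ∈ M.latt := by
  simp only [latt, Submodule.mem_pi, Set.mem_univ, forall_true_left, forall_const]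
  constructor
  · intro h
    constructor
    · intro i; simpa [glue_castAdd] using h (Fin.castAdd M.n i)
    · intro j; simpa [glue_natAdd] using h (Fin.natAdd L.n j)
  · intro ⟨h1, h2⟩ i
    rw [← finSumFinEquiv.apply_symm_apply i]
    rcases finSumFinEquiv.symm i with s | s
    · simpa [glue_castAdd] using h1 s
    · simpa [glue_natAdd] using h2 s

end DSumB

section MatOf

variable (L : IntLattice)

lemma matOf_mulVec (g : (Fin L.n → ℤ) →ₗ[ℤ] (Fin L.n → ℤ)) (v : Fin L.n → ℤ) :
    (L.matOf g).mulVec v = g v := by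
  have hv : g v = ∑ j, v j • g (Pi.single j 1) := by
    conv_lhs => rw [show v = ∑ j, v j • Pi.single j (1:ℤ) by
      funext i; simp [Pi.single_apply, Finset.sum_apply]]
    rw [map_sum]
    exact Finset.sum_congr rfl fun j _ => map_smul g _ _
  funext i
  rw [hv]
  simp only [Matrix.mulVec, dotProduct, matOf, Matrix.of_apply, Finset.sum_apply,
    Pi.smul_apply, smul_eq_mul]
  exact Finset.sum_congr rfl fun j _ => mul_comm _ _

lemma matOf_unique (g : (Fin L.n → ℤ) →ₗ[ℤ] (Fin L.n → ℤ))
    (A : Matrix (Fin L.n) (Fin L.n) ℤ) (h : ∀ v, A.mulVec v = g v) :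
    L.matOf g = A := by
  ext i j
  have := congrFun (h (Pi.single j 1)) i
  simp only [matOf, Matrix.of_apply]
  rw [← this]
  simp [Matrix.mulVec, dotProduct, Pi.single_apply]

end MatOf

end IntLattice
namespace IntLattice

open Matrix

section BlockMap

variable {k l : ℕ} {S : Type*} [CommRing S]

lemma submatrix_fromBlocks_map (f : ℤ → S) (hf : f 0 = 0)
    (M1 : Matrix (Fin k) (Fin k) ℤ) (M2 : Matrix (Fin l) (Fin l) ℤ) :
    ((Matrix.fromBlocks M1 0 0 M2).submatrix finSumFinEquiv.symm finSumFinEquiv.symm).map f =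
      (Matrix.fromBlocks (M1.map f) 0 0 (M2.map f)).submatrix
        finSumFinEquiv.symm finSumFinEquiv.symm := by
  ext i j
  rcases h1 : finSumFinEquiv.symm i with s | s <;> rcases h2 : finSumFinEquiv.symm j with t | t <;>
    simp [Matrix.map_apply, Matrix.submatrix_apply, h1, h2, hf]

end BlockMap

section GSum

variable (L M : IntLattice)

lemma block_mul (N1 N2 : Matrix (Fin M.n) (Fin M.n) ℤ) :
    ((Matrix.fromBlocks (1 : Matrix (Fin L.n) (Fin L.n) ℤ) 0 0 N1).submatrix
        finSumFinEquiv.symm finSumFinEquiv.symm) *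
      ((Matrix.fromBlocks (1 : Matrix (Fin L.n) (Fin L.n) ℤ) 0 0 N2).submatrix
        finSumFinEquiv.symm finSumFinEquiv.symm) =
      (Matrix.fromBlocks 1 0 0 (N1 * N2)).submatrix
        finSumFinEquiv.symm finSumFinEquiv.symm := by
  rw [Matrix.submatrix_mul_equiv, Matrix.fromBlocks_multiply]
  simp

variable (gh : (Fin M.n → ℤ) ≃ₗ[ℤ] (Fin M.n → ℤ))

/-- The block matrix of `1 ⊕ gh` on the direct sum. -/
def Amat : Matrix (Fin (L + M).n) (Fin (L + M).n) ℤ :=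
  (Matrix.fromBlocks (1 : Matrix (Fin L.n) (Fin L.n) ℤ) 0 0 (M.matOf gh.toLinearMap)).submatrix
    finSumFinEquiv.symm finSumFinEquiv.symm

lemma matOf_mul_matOf (f g : (Fin M.n → ℤ) →ₗ[ℤ] (Fin M.n → ℤ)) :
    M.matOf f * M.matOf g = M.matOf (f.comp g) := by
  refine (matOf_unique M _ _ fun v => ?_).symm
  rw [← Matrix.mulVec_mulVec, matOf_mulVec, matOf_mulVec]
  rfl

lemma Amat_mul_Amat : Amat L M gh * Amat L M gh.symm = 1 := by
  show ((Matrix.fromBlocks _ _ _ _).submatrix _ _) * ((Matrix.fromBlocks _ _ _ _).submatrix _ _) = 1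
  rw [block_mul, matOf_mul_matOf]
  have h1 : gh.toLinearMap.comp gh.symm.toLinearMap = LinearMap.id := by
    ext v; simp
  have h2 : M.matOf LinearMap.id = 1 := by
    refine matOf_unique M _ _ fun v => ?_
    simp
  rw [h1, h2, Matrix.fromBlocks_one, Matrix.submatrix_one_equiv]

/-- The isometry `1 ⊕ gh` of the direct sum. -/
def gsum : (Fin (L + M).n → ℤ) ≃ₗ[ℤ] (Fin (L + M).n → ℤ) :=
  LinearEquiv.ofLinear (Matrix.mulVecLin (Amat L M gh)) (Matrix.mulVecLin (Amat L M gh.symm))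
    (by rw [← Matrix.mulVecLin_mul, Amat_mul_Amat]; exact Matrix.mulVecLin_one)
    (by
      have := Amat_mul_Amat L M gh.symm
      rw [show gh.symm.symm = gh from rfl] at this
      rw [← Matrix.mulVecLin_mul, this]; exact Matrix.mulVecLin_one)

lemma gsum_apply (x : Fin (L + M).n → ℤ) : gsum L M gh x = (Amat L M gh).mulVec x := rfl

lemma Amat_map_eq {S : Type*} [CommRing S] (f : ℤ →+* S) :
    (Amat L M gh).map (f : ℤ → S) =
      (Matrix.fromBlocks (1 : Matrix (Fin L.n) (Fin L.n) S) 0 0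
        ((M.matOf gh.toLinearMap).map (f : ℤ → S))).submatrix
        finSumFinEquiv.symm finSumFinEquiv.symm := by
  show ((Matrix.fromBlocks _ _ _ _).submatrix _ _).map _ = _
  rw [submatrix_fromBlocks_map _ (map_zero f), Matrix.map_one _ (map_zero f) (map_one f)]

lemma Amat_mulVec_glue {S : Type*} [CommRing S] (f : ℤ →+* S)
    (p : (Fin L.n → S) × (Fin M.n → S)) :
    ((Amat L M gh).map (f : ℤ → S)).mulVec (glue p) =
      glue (p.1, ((M.matOf gh.toLinearMap).map (f : ℤ → S)).mulVec p.2) := by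
  rw [Amat_map_eq, block_mulVec]
  simp

lemma Amat_mulVec_glue_int (p : (Fin L.n → ℤ) × (Fin M.n → ℤ)) :
    (Amat L M gh).mulVec (glue p) = glue (p.1, gh p.2) := by
  have := Amat_mulVec_glue L M gh (RingHom.id ℤ) p
  have h2 : ∀ {k l : ℕ} (A : Matrix (Fin k) (Fin l) ℤ),
      A.map ((RingHom.id ℤ) : ℤ → ℤ) = A := by intro k l A; ext i j; simp
  rw [h2, h2] at this
  rw [this, matOf_mulVec]
  rfl

lemma gsum_glue (p : (Fin L.n → ℤ) × (Fin M.n → ℤ)) :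
    gsum L M gh (glue p) = glue (p.1, gh p.2) := by
  rw [gsum_apply, Amat_mulVec_glue_int]

lemma matOf_gsum : (L + M).matOf (gsum L M gh).toLinearMap = Amat L M gh :=
  matOf_unique _ _ _ fun _ => rfl

lemma mapR_gsum_glue (p : (Fin L.n → ℝ) × (Fin M.n → ℝ)) :
    (L + M).mapR (gsum L M gh).toLinearMap (glue p) =
      glue (p.1, M.mapR gh.toLinearMap p.2) := by
  show (((L + M).matOf (gsum L M gh).toLinearMap).map _).mulVec (glue p) = _
  rw [matOf_gsum]
  exact Amat_mulVec_glue L M gh (Int.castRingHom ℝ) p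

lemma mapQ_gsum_glue (p : (Fin L.n → ℚ) × (Fin M.n → ℚ)) :
    (L + M).mapQ (gsum L M gh).toLinearMap (glue p) =
      glue (p.1, M.mapQ gh.toLinearMap p.2) := by
  show (((L + M).matOf (gsum L M gh).toLinearMap).map _).mulVec (glue p) = _
  rw [matOf_gsum]
  exact Amat_mulVec_glue L M gh (Int.castRingHom ℚ) p

lemma gsum_isometry (hgh : M.IsIsometry gh) : (L + M).IsIsometry (gsum L M gh) := by
  intro x y
  rw [← glue_spl x, ← glue_spl y, gsum_glue, gsum_glue, bform_glue, bform_glue]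
  exact congrArg _ (hgh _ _)

end GSum

section DualSplit

variable (L M : IntLattice)

lemma spl_dual {y : Fin (L + M).n → ℚ} (hy : y ∈ (L + M).dual) :
    (spl y).1 ∈ L.dual ∧ (spl y).2 ∈ M.dual := by
  constructor
  · intro x
    have h : ((L + M).bQ y fun (i : Fin (L.n + M.n)) =>
        ((glue (x, (0 : Fin M.n → ℤ)) i : ℤ) : ℚ)) ∈ intQ := hy (glue (x, 0))
    have hzero : (fun j => (((0 : Fin M.n → ℤ) j : ℤ) : ℚ)) = (0 : Fin M.n → ℚ) := by
      funext j; simp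
    rw [glue_map (Int.cast : ℤ → ℚ) (x, (0 : Fin M.n → ℤ)), hzero] at h
    have heq : (L + M).bQ y (glue ((fun i => ((x i : ℤ) : ℚ)), 0)) =
        L.bQ (spl y).1 (fun i => ((x i : ℤ) : ℚ)) := by
      conv_lhs => rw [← glue_spl y]
      rw [bQ_glue]
      have h0 : M.bQ (spl y).2 0 = 0 := by
        simp [bQ, Matrix.mulVec_zero]
      rw [h0, add_zero]
    rwa [heq] at h
  · intro x
    have h : ((L + M).bQ y fun (i : Fin (L.n + M.n)) =>
        ((glue ((0 : Fin L.n → ℤ), x) i : ℤ) : ℚ)) ∈ intQ := hy (glue (0, x))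
    have hzero : (fun j => (((0 : Fin L.n → ℤ) j : ℤ) : ℚ)) = (0 : Fin L.n → ℚ) := by
      funext j; simp
    rw [glue_map (Int.cast : ℤ → ℚ) ((0 : Fin L.n → ℤ), x), hzero] at h
    have heq : (L + M).bQ y (glue (0, (fun i => ((x i : ℤ) : ℚ)))) =
        M.bQ (spl y).2 (fun i => ((x i : ℤ) : ℚ)) := by
      conv_lhs => rw [← glue_spl y]
      rw [bQ_glue]
      have h0 : L.bQ (spl y).1 0 = 0 := by
        simp [bQ, Matrix.mulVec_zero]
      rw [h0, zero_add]
    rwa [heq] at h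

lemma spl_smul_latt {c : ℤ} {y : Fin (L + M).n → ℚ} (hy : c • y ∈ (L + M).latt) :
    c • (spl y).1 ∈ L.latt ∧ c • (spl y).2 ∈ M.latt := by
  simp only [latt, Submodule.mem_pi, Set.mem_univ, forall_true_left, forall_const] at hy ⊢
  exact ⟨fun i => hy _, fun j => hy _⟩

end DualSplit

section Invariance

variable (L : IntLattice)

lemma dot_transfer {R : Type*} [CommRing R] {k : ℕ} (A : Matrix (Fin k) (Fin k) R)
    (x z : Fin k → R) :
    dotProduct (A.mulVec x) z = dotProduct x (Aᵀ.mulVec z) := by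
  rw [dotProduct_comm, Matrix.dotProduct_mulVec, ← dotProduct_comm]
  congr 1
  funext i
  rw [Matrix.mulVec_transpose]

lemma gram_invariance (g : (Fin L.n → ℤ) ≃ₗ[ℤ] (Fin L.n → ℤ)) (hg : L.IsIsometry g) :
    (L.matOf g.toLinearMap)ᵀ * L.B * (L.matOf g.toLinearMap) = L.B := by
  set A := L.matOf g.toLinearMap with hA
  have hgx : ∀ u, A.mulVec u = g u := fun u => (matOf_mulVec L g.toLinearMap u).trans rfl
  have h1 : ∀ (N : Matrix (Fin L.n) (Fin L.n) ℤ) (i j : Fin L.n),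
      dotProduct (Pi.single i (1:ℤ)) (N.mulVec (Pi.single j 1)) = N i j := by
    intro N i j
    rw [show N.mulVec (Pi.single j (1:ℤ)) = fun k => N k j by
      funext k; simp [Matrix.mulVec, dotProduct, Pi.single_apply]]
    simp [dotProduct, Pi.single_apply]
  ext i j
  have h := hg (Pi.single i 1) (Pi.single j 1)
  simp only [bform] at h
  rw [← hgx, ← hgx, dot_transfer, Matrix.mulVec_mulVec, Matrix.mulVec_mulVec] at h
  rw [← h1 (Aᵀ * L.B * A) i j, ← h1 L.B i j]
  exact h

end Invariance

end IntLattice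
namespace IntLattice

open Matrix

section Bilin

variable (L : IntLattice)

lemma bR_apply (x y : Fin L.n → ℝ) :
    L.bR x y = ∑ i, x i * ∑ j, (L.B i j : ℝ) * y j := rfl

lemma bR_add_right (x a b : Fin L.n → ℝ) : L.bR x (a + b) = L.bR x a + L.bR x b := by
  simp [bR, Matrix.mulVec_add, dotProduct_add]

lemma bR_sub_right (x a b : Fin L.n → ℝ) : L.bR x (a - b) = L.bR x a - L.bR x b := by
  simp [bR, Matrix.mulVec_sub, dotProduct_sub]

lemma bR_smul_right (c : ℝ) (x a : Fin L.n → ℝ) : L.bR x (c • a) = c * L.bR x a := by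
  simp [bR, Matrix.mulVec_smul, dotProduct_smul, smul_eq_mul]

lemma bR_add_left' (x a b : Fin L.n → ℝ) : L.bR (a + b) x = L.bR a x + L.bR b x :=
  add_dotProduct _ _ _

lemma bR_sub_left' (x a b : Fin L.n → ℝ) : L.bR (a - b) x = L.bR a x - L.bR b x :=
  sub_dotProduct _ _ _

lemma bR_smul_left' (c : ℝ) (x a : Fin L.n → ℝ) : L.bR (c • a) x = c * L.bR a x :=
  smul_dotProduct _ _ _

lemma bR_zero_right (x : Fin L.n → ℝ) : L.bR x 0 = 0 := by
  simp [bR, Matrix.mulVec_zero]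

lemma bR_comm (hs : L.IsSymmLat) (x y : Fin L.n → ℝ) : L.bR x y = L.bR y x := by
  have hB : ∀ i j, L.B j i = L.B i j := fun i j => by
    conv_lhs => rw [← hs]
    rfl
  rw [bR_apply, bR_apply]
  simp only [Finset.mul_sum]
  rw [Finset.sum_comm]
  refine Finset.sum_congr rfl fun j _ => Finset.sum_congr rfl fun i _ => ?_
  rw [hB j i]
  ring

lemma bR_expand (hs : L.IsSymmLat) (s t : ℝ) (x y : Fin L.n → ℝ) :
    L.bR (s • x + t • y) (s • x + t • y) =
      s^2 * L.bR x x + 2 * s * t * L.bR x y + t^2 * L.bR y y := by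
  rw [bR_add_left', bR_smul_left', bR_smul_left', bR_add_right, bR_add_right,
    bR_smul_right, bR_smul_right, bR_smul_right, bR_smul_right, bR_comm L hs y x]
  ring

lemma cont_bR_left (y : Fin L.n → ℝ) : Continuous fun x => L.bR x y := by
  simp only [bR_apply]
  exact continuous_finset_sum _ fun i _ => (continuous_apply i).mul continuous_const

lemma cont_bR_right (x : Fin L.n → ℝ) : Continuous fun y => L.bR x y := by
  simp only [bR_apply]
  exact continuous_finset_sum _ fun i _ => continuous_const.mul
    (continuous_finset_sum _ fun j _ => continuous_const.mul (continuous_apply j))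

lemma cont_q : Continuous fun x => L.bR x x := by
  simp only [bR_apply]
  exact continuous_finset_sum _ fun i _ => (continuous_apply i).mul
    (continuous_finset_sum _ fun j _ => continuous_const.mul (continuous_apply j))

end Bilin

section PosDef

variable (L : IntLattice)

/-- Clearing denominators. -/
lemma exists_common_den (u : Fin L.n → ℚ) :
    ∃ (d : ℤ) (w : Fin L.n → ℤ), 0 < d ∧ ∀ i, (d : ℚ) * u i = (w i : ℚ) := by
  refine ⟨∏ i, ((u i).den : ℤ), fun i => (u i).num * ∏ j ∈ Finset.univ.erase i, ((u j).den : ℤ),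
    Finset.prod_pos fun i _ => Int.natCast_pos.mpr (u i).pos, fun i => ?_⟩
  have hd : (∏ j, ((u j).den : ℤ)) = ((u i).den : ℤ) * ∏ j ∈ Finset.univ.erase i, ((u j).den : ℤ) :=
    (Finset.mul_prod_erase _ _ (Finset.mem_univ i)).symm
  rw [hd]
  push_cast
  have hnum : u i * ((u i).den : ℚ) = ((u i).num : ℚ) := Rat.mul_den_eq_num _
  linear_combination (∏ x ∈ Finset.univ.erase i, ((u x).den:ℚ)) * hnum

lemma bQ_nonneg (hpose : ∀ x : Fin L.n → ℤ, x ≠ 0 → 0 < L.bform x x) (u : Fin L.n → ℚ) :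
    0 ≤ L.bQ u u := by
  obtain ⟨d, w, hd, hw⟩ := exists_common_den L u
  have hcast : (fun i => ((w i : ℤ) : ℚ)) = (d : ℚ) • u := by
    funext i; simp [hw i, smul_eq_mul]
  have h1 : L.bQ ((d:ℚ) • u) ((d:ℚ) • u) = (d:ℚ)^2 * L.bQ u u := by
    simp only [bQ, Matrix.mulVec_smul, dotProduct_smul, smul_dotProduct,
      smul_eq_mul]
    ring
  have h2 : L.bQ ((d:ℚ) • u) ((d:ℚ) • u) = ((L.bform w w : ℤ) : ℚ) := by
    rw [← hcast]; exact bQ_cast L w w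
  rcases eq_or_ne w 0 with hw0 | hw0
  · have hz : L.bQ ((d:ℚ)•u) ((d:ℚ)•u) = 0 := by rw [h2, hw0]; simp [bform, Matrix.mulVec_zero]
    rw [h1] at hz
    have hd2 : ((d:ℚ))^2 ≠ 0 := pow_ne_zero _ (Int.cast_ne_zero.mpr hd.ne')
    rcases mul_eq_zero.mp hz with h | h
    · exact absurd h hd2
    · rw [h]
  · have hpos := hpose w hw0
    have : (0:ℚ) < ((L.bform w w : ℤ) : ℚ) := by exact_mod_cast hpos
    rw [← h2, h1] at this
    nlinarith [sq_nonneg (d:ℚ), this]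

lemma bQ_eq_bR (u : Fin L.n → ℚ) :
    L.bR (fun i => ((u i : ℚ) : ℝ)) (fun i => ((u i : ℚ) : ℝ)) = ((L.bQ u u : ℚ) : ℝ) := by
  simp [bR, bQ, Matrix.mulVec, dotProduct, Matrix.map_apply, Finset.mul_sum]

lemma bR_psd (hpose : ∀ x : Fin L.n → ℤ, x ≠ 0 → 0 < L.bform x x) (x : Fin L.n → ℝ) :
    0 ≤ L.bR x x := by
  -- approximate by rationals
  have hex : ∀ k : ℕ, ∃ u : Fin L.n → ℚ, ∀ i, |x i - (u i : ℝ)| < 1/(k+1) := by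
    intro k
    have : ∀ i, ∃ q : ℚ, |x i - (q : ℝ)| < 1/(k+1) := fun i =>
      exists_rat_near (x i) (by positivity)
    exact ⟨fun i => Classical.choose (this i), fun i => Classical.choose_spec (this i)⟩
  choose u hu using hex
  have htend : Filter.Tendsto (fun k => (fun i => ((u k i : ℚ) : ℝ))) Filter.atTop (nhds x) := by
    rw [tendsto_pi_nhds]
    intro i
    have h0 : Filter.Tendsto (fun k : ℕ => (1:ℝ)/(k+1)) Filter.atTop (nhds 0) :=
      tendsto_one_div_add_atTop_nhds_zero_nat
    have : Filter.Tendsto (fun k => ((u k i : ℝ)) - x i) Filter.atTop (nhds 0) := by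
      refine squeeze_zero_norm (fun k => ?_) h0
      rw [Real.norm_eq_abs, abs_sub_comm]
      exact le_of_lt (hu k i)
    have := this.add_const (x i)
    simpa using this
  have hcont := (cont_q L).tendsto x
  have := hcont.comp htend
  refine ge_of_tendsto' this fun k => ?_
  show (0:ℝ) ≤ L.bR _ _
  rw [bQ_eq_bR]
  exact_mod_cast bQ_nonneg L hpose (u k)

lemma cauchy_schwarz (hs : L.IsSymmLat) (hpsd : ∀ z, 0 ≤ L.bR z z) (x y : Fin L.n → ℝ) :
    (L.bR x y)^2 ≤ L.bR x x * L.bR y y := by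
  have key : ∀ t : ℝ, 0 ≤ L.bR y y * (t*t) + (2 * L.bR x y) * t + L.bR x x := by
    intro t
    have := hpsd (x + t • y)
    have hexp : L.bR (x + t • y) (x + t • y) =
        L.bR y y * (t*t) + (2 * L.bR x y) * t + L.bR x x := by
      have := bR_expand L hs 1 t x y
      simp only [one_smul, one_pow, one_mul, mul_one] at this
      rw [this]
      ring
    linarith [hexp ▸ this]
  have := discrim_le_zero key
  rw [discrim] at this
  nlinarith [this]

lemma det_ne_zero (hpose : ∀ x : Fin L.n → ℤ, x ≠ 0 → 0 < L.bform x x) :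
    L.B.det ≠ 0 := by
  intro hdet
  have hdetQ : (L.B.map (Int.cast : ℤ → ℚ)).det = 0 := by
    have h := RingHom.map_det (Int.castRingHom ℚ) L.B
    rw [show ((Int.castRingHom ℚ).mapMatrix L.B) = L.B.map (Int.cast : ℤ → ℚ) from rfl] at h
    rw [← h, hdet]
    simp
  obtain ⟨v, hv0, hv⟩ := (Matrix.exists_mulVec_eq_zero_iff).2 hdetQ
  obtain ⟨d, w, hd, hw⟩ := exists_common_den L v
  have hwv : (fun i => ((w i : ℤ) : ℚ)) = (d:ℚ) • v := by
    funext i; simp [hw i, smul_eq_mul]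
  have hw0 : w ≠ 0 := by
    intro h
    apply hv0
    funext i
    have hthis := hw i
    rw [h] at hthis
    simp only [Pi.zero_apply, Int.cast_zero] at hthis
    have hd' : (d:ℚ) ≠ 0 := by exact_mod_cast hd.ne'
    rcases mul_eq_zero.mp hthis with hcontra | hgood
    · exact absurd hcontra hd'
    · simpa using hgood
  have hBw : L.B.mulVec w = 0 := by
    have hcast : (fun i => ((L.B.mulVec w i : ℤ) : ℚ)) = 0 := by
      rw [cast_mulVec, hwv, Matrix.mulVec_smul, hv]
      simp
    funext i
    have h2 := congrFun hcast i
    simp only [Pi.zero_apply] at h2 ⊢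
    exact_mod_cast h2
  have := hpose w hw0
  rw [bform, hBw] at this
  simp [dotProduct_zero] at this

end PosDef

end IntLattice
namespace IntLattice

open Matrix

section Lorentz

variable (L : IntLattice)

lemma dot_diagonal (d u t : Fin L.n → ℝ) :
    dotProduct u ((Matrix.diagonal d).mulVec t) = ∑ i, d i * (u i * t i) := by
  refine Finset.sum_congr rfl fun i _ => ?_
  rw [Matrix.mulVec_diagonal]
  ring

lemma lorentz_package (hs : L.IsSymmLat) (hnd : L.Nondeg) (hsig : L.negIndexEq 1) :
    (∀ z w : Fin L.n → ℝ, L.bR z z < 0 → L.bR z w = 0 → 0 ≤ L.bR w w) ∧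
    (∀ z w : Fin L.n → ℝ, L.bR z z < 0 → L.bR z w = 0 → L.bR w w ≤ 0 → w = 0) := by
  obtain ⟨P, hPdet, d, hP, hcard⟩ := hsig
  set Bf := L.B.map (Int.cast : ℤ → ℝ) with hBf
  have hdetBf : Bf.det ≠ 0 := by
    have h := RingHom.map_det (Int.castRingHom ℝ) L.B
    rw [show ((Int.castRingHom ℝ).mapMatrix L.B) = L.B.map (Int.cast : ℤ → ℝ) from rfl] at h
    rw [hBf, ← h]
    intro h0
    rw [show ((Int.castRingHom ℝ) L.B.det) = ((L.B.det : ℤ) : ℝ) from rfl] at h0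
    exact hnd (by exact_mod_cast h0)
  have hProd : (∏ i, d i) ≠ 0 := by
    have h1 : (Matrix.diagonal d).det = Pᵀ.det * Bf.det * P.det := by
      rw [← hP, Matrix.det_mul, Matrix.det_mul]
    rw [Matrix.det_diagonal] at h1
    rw [h1]
    exact mul_ne_zero (mul_ne_zero (by rw [Matrix.det_transpose]; exact hPdet.ne_zero) hdetBf)
      hPdet.ne_zero
  have hd0 : ∀ i, d i ≠ 0 := fun i =>
    Finset.prod_ne_zero_iff.mp hProd i (Finset.mem_univ i)
  obtain ⟨⟨i₀, hi₀⟩, huniq⟩ := Nat.card_eq_one_iff_exists.mp hcard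
  have hpos : ∀ j, j ≠ i₀ → 0 < d j := by
    intro j hj
    rcases (hd0 j).lt_or_gt with h | h
    · exact absurd (congrArg Subtype.val (huniq ⟨j, h⟩)) hj
    · exact h
  have hPP : P * P⁻¹ = 1 := Matrix.mul_nonsing_inv P hPdet
  set c : (Fin L.n → ℝ) → (Fin L.n → ℝ) := fun v => P⁻¹.mulVec v with hc
  have hvP : ∀ v, P.mulVec (c v) = v := by
    intro v
    rw [hc, Matrix.mulVec_mulVec, hPP, Matrix.one_mulVec]
  have hform' : ∀ a b : Fin L.n → ℝ, L.bR (P.mulVec a) (P.mulVec b) = ∑ i, d i * (a i * b i) := by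
    intro a b
    show dotProduct (P.mulVec a) (Bf.mulVec (P.mulVec b)) = _
    rw [dot_transfer, Matrix.mulVec_mulVec, Matrix.mulVec_mulVec, hP, dot_diagonal]
  have hform : ∀ v w : Fin L.n → ℝ, L.bR v w = ∑ i, d i * (c v i * c w i) := by
    intro v w
    conv_lhs => rw [← hvP v, ← hvP w]
    exact hform' (c v) (c w)
  have hq_nonneg : ∀ v : Fin L.n → ℝ, c v i₀ = 0 → 0 ≤ L.bR v v := by
    intro v hv
    rw [hform]
    refine Finset.sum_nonneg fun i _ => ?_
    rcases eq_or_ne i i₀ with h | h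
    · rw [h, hv]; simp
    · exact mul_nonneg (hpos i h).le (mul_self_nonneg _)
  have hz0 : ∀ z : Fin L.n → ℝ, L.bR z z < 0 → c z i₀ ≠ 0 := by
    intro z hz h
    exact absurd (hq_nonneg z h) (not_le.mpr hz)
  -- main computation
  have main : ∀ z w : Fin L.n → ℝ, L.bR z z < 0 → L.bR z w = 0 →
      (0 ≤ L.bR w w ∧ (L.bR w w ≤ 0 → w = 0)) := by
    intro z w hz hzw
    set lam := c w i₀ / c z i₀ with hlam
    set u := w - lam • z with hu
    have hcu : ∀ i, c u i = c w i - lam * c z i := by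
      intro i
      rw [hu, hc]
      simp [Matrix.mulVec_sub, Matrix.mulVec_smul, smul_eq_mul]
    have hcu0 : c u i₀ = 0 := by
      rw [hcu, hlam, div_mul_cancel₀ _ (hz0 z hz), sub_self]
    have hqu : 0 ≤ L.bR u u := hq_nonneg u hcu0
    have hexp : L.bR u u = L.bR w w + lam^2 * L.bR z z := by
      rw [hu, bR_sub_left', bR_sub_right, bR_sub_right, bR_smul_right, bR_smul_right,
        bR_smul_left', bR_smul_left']
      rw [bR_comm L hs w z, hzw]
      ring
    constructor
    · nlinarith [sq_nonneg lam]
    · intro hw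
      have hqu0 : L.bR u u = 0 := le_antisymm (by nlinarith [sq_nonneg lam]) hqu
      have hterms : ∀ i ∈ Finset.univ, (0:ℝ) ≤ d i * (c u i * c u i) := by
        intro i _
        rcases eq_or_ne i i₀ with h | h
        · rw [h, hcu0]; simp
        · exact mul_nonneg (hpos i h).le (mul_self_nonneg _)
      have hzero : ∀ i ∈ Finset.univ, d i * (c u i * c u i) = 0 := by
        rw [← Finset.sum_eq_zero_iff_of_nonneg hterms]
        rw [← hform u u]
        exact hqu0
      have hcuzero : c u = 0 := by
        funext i
        rcases eq_or_ne i i₀ with h | h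
        · rw [h]; exact hcu0
        · have := hzero i (Finset.mem_univ i)
          have h2 := mul_eq_zero.mp this
          rcases h2 with h2 | h2
          · exact absurd h2 (hd0 i)
          · simpa [mul_self_eq_zero] using h2
      have hu0 : u = 0 := by
        rw [← hvP u, hcuzero, Matrix.mulVec_zero]
      have hwlz : w = lam • z := by
        have h3 := hu0
        rw [hu, sub_eq_zero] at h3
        exact h3
      have hlam0 : lam = 0 := by
        have h4 : L.bR z (lam • z) = lam * L.bR z z := bR_smul_right L lam z z
        rw [← hwlz, hzw] at h4
        rcases mul_eq_zero.mp h4.symm with h5 | h5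
        · exact h5
        · exact absurd h5 hz.ne
      rw [hwlz, hlam0, zero_smul]
  exact ⟨fun z w hz hzw => (main z w hz hzw).1, fun z w hz hzw hw => (main z w hz hzw).2 hw⟩

end Lorentz

end IntLattice
namespace IntLattice

open Matrix

section Bounds

variable (L : IntLattice)

/-- For timelike `z` and `v` with `q(v) ≤ 0`: reverse Cauchy-Schwarz. -/
lemma timelike_bound (hs : L.IsSymmLat) (hnd : L.Nondeg) (hsig : L.negIndexEq 1)
    (z v : Fin L.n → ℝ) (hz : L.bR z z < 0) (hv : L.bR v v ≤ 0) :
    (-(L.bR v v)) * (-(L.bR z z)) ≤ (L.bR z v)^2 := by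
  obtain ⟨hL1, _⟩ := lorentz_package L hs hnd hsig
  set al := L.bR z v / L.bR z z with hal
  set w := v - al • z with hw
  have hzw : L.bR z w = 0 := by
    rw [hw, bR_sub_right, bR_smul_right, hal, div_mul_cancel₀ _ hz.ne, sub_self]
  have hqw : 0 ≤ L.bR w w := hL1 z w hz hzw
  have hexp : L.bR w w = L.bR v v - al^2 * L.bR z z := by
    rw [hw, bR_sub_left', bR_sub_right, bR_sub_right, bR_smul_right, bR_smul_right,
      bR_smul_left', bR_smul_left']
    rw [bR_comm L hs v z]
    have : L.bR z v = al * L.bR z z := by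
      rw [hal, div_mul_cancel₀ _ hz.ne]
    rw [this]
    ring
  have hzv : L.bR z v = al * L.bR z z := by rw [hal, div_mul_cancel₀ _ hz.ne]
  rw [hzv]
  nlinarith [sq_nonneg al, hqw, hexp]

/-- Uniform lower bound for pairings with nonzero integral isotropic vectors. -/
lemma isotropic_bound (hs : L.IsSymmLat) (hnd : L.Nondeg) (hsig : L.negIndexEq 1)
    (z : Fin L.n → ℝ) (hz : L.bR z z < 0) :
    ∃ ε > 0, ∀ v : Fin L.n → ℤ, v ≠ 0 →
      L.bR (fun i => (v i : ℝ)) (fun i => (v i : ℝ)) = 0 →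
      ε ≤ |L.bR z (fun i => (v i : ℝ))| := by
  obtain ⟨_, hL2⟩ := lorentz_package L hs hnd hsig
  set K : Set (Fin L.n → ℝ) := Metric.sphere 0 1 ∩ {u | L.bR u u = 0} with hK
  have hKc : IsCompact K := (isCompact_sphere 0 1).inter_right
    (isClosed_eq (cont_q L) continuous_const)
  have hvbar : ∀ v : Fin L.n → ℤ, v ≠ 0 → (fun i => ((v i : ℤ) : ℝ)) ≠ 0 ∧
      1 ≤ ‖(fun i => ((v i : ℤ) : ℝ))‖ := by
    intro v hv
    obtain ⟨i, hi⟩ := Function.ne_iff.mp hv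
    have h1 : (1:ℝ) ≤ |((v i : ℤ) : ℝ)| := by
      rw [← Int.cast_abs]
      exact_mod_cast Int.one_le_abs hi
    constructor
    · intro h
      have := congrFun h i
      simp only [Pi.zero_apply, Int.cast_eq_zero] at this
      exact hi this
    · calc (1:ℝ) ≤ |((v i : ℤ) : ℝ)| := h1
        _ ≤ ‖(fun i => ((v i : ℤ) : ℝ))‖ := by
          rw [← Real.norm_eq_abs]
          exact norm_le_pi_norm (fun j => ((v j : ℤ) : ℝ)) i
  have hmem : ∀ v : Fin L.n → ℤ, v ≠ 0 →
      L.bR (fun i => (v i : ℝ)) (fun i => (v i : ℝ)) = 0 →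
      (‖(fun i => ((v i : ℤ) : ℝ))‖⁻¹ • (fun i => ((v i : ℤ) : ℝ))) ∈ K := by
    intro v hv hq
    obtain ⟨hne, hge⟩ := hvbar v hv
    have hnorm : ‖(fun i => ((v i : ℤ) : ℝ))‖ ≠ 0 := by positivity
    constructor
    · simp only [Metric.mem_sphere, dist_zero_right, norm_smul, norm_inv, norm_norm]
      rw [inv_mul_cancel₀ hnorm]
    · show L.bR _ _ = 0
      rw [bR_smul_left', bR_smul_right, hq]
      ring
  by_cases hne : K.Nonempty
  · obtain ⟨u₀, hu₀K, hmin⟩ := hKc.exists_isMinOn hne ((cont_bR_right L z).abs.continuousOn)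
    have hu₀ : L.bR z u₀ ≠ 0 := by
      intro h
      have hq : L.bR u₀ u₀ = 0 := hu₀K.2
      have := hL2 z u₀ hz h hq.le
      rw [this] at hu₀K
      have := hu₀K.1
      simp at this
    refine ⟨|L.bR z u₀|, abs_pos.mpr hu₀, fun v hv hq => ?_⟩
    obtain ⟨hne', hge⟩ := hvbar v hv
    set n0 := ‖(fun i => ((v i : ℤ) : ℝ))‖ with hn0
    have hn0pos : 0 < n0 := lt_of_lt_of_le one_pos hge
    have hmem' := hmem v hv hq
    have h1 : |L.bR z u₀| ≤ |L.bR z (n0⁻¹ • fun i => ((v i : ℤ) : ℝ))| :=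
      hmin hmem'
    rw [bR_smul_right, abs_mul, abs_inv, abs_of_pos hn0pos] at h1
    have h2 : |L.bR z u₀| * n0 ≤ |L.bR z fun i => ((v i : ℤ) : ℝ)| := by
      rw [← mul_le_mul_iff_left₀ hn0pos] at h1
      calc |L.bR z u₀| * n0 = |L.bR z u₀| * n0 := rfl
        _ ≤ n0⁻¹ * |L.bR z fun i => ((v i : ℤ) : ℝ)| * n0 := h1
        _ = |L.bR z fun i => ((v i : ℤ) : ℝ)| := by field_simp
    calc |L.bR z u₀| = |L.bR z u₀| * 1 := (mul_one _).symm
      _ ≤ |L.bR z u₀| * n0 := by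
          exact mul_le_mul_of_nonneg_left hge (abs_nonneg _)
      _ ≤ _ := h2
  · refine ⟨1, one_pos, fun v hv hq => ?_⟩
    exact absurd ⟨_, hmem v hv hq⟩ hne

end Bounds

section Topology

/-- Sign constancy of a nonvanishing continuous function on a preconnected set. -/
lemma sign_const {m : ℕ} {S : Set (Fin m → ℝ)} (hS : IsPreconnected S)
    {f : (Fin m → ℝ) → ℝ} (hf : Continuous f) (h0 : ∀ s ∈ S, f s ≠ 0)
    {x y : Fin m → ℝ} (hx : x ∈ S) (hy : y ∈ S) (hfx : f x < 0) : f y < 0 := by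
  by_contra h
  have hfy : 0 < f y := lt_of_le_of_ne (not_lt.mp h) (Ne.symm (h0 y hy))
  have himg : IsPreconnected (f '' S) := hS.image f hf.continuousOn
  have h0mem : (0:ℝ) ∈ f '' S := by
    have := himg.Icc_subset (Set.mem_image_of_mem f hx) (Set.mem_image_of_mem f hy)
    exact this ⟨hfx.le, hfy.le⟩
  obtain ⟨s, hsS, hs0⟩ := h0mem
  exact h0 s hsS hs0

/-- Image of a relative connected component under an invertible continuous map
preserving the ambient set. -/
lemma image_connCompIn {m : ℕ} {F : Set (Fin m → ℝ)} {f g : (Fin m → ℝ) → (Fin m → ℝ)}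
    (hf : Continuous f) (hg : Continuous g) (hgf : ∀ x, g (f x) = x) (hfg : ∀ x, f (g x) = x)
    (hF : Set.MapsTo f F F) (hG : Set.MapsTo g F F) {x : Fin m → ℝ} (hx : x ∈ F) :
    f '' connectedComponentIn F x = connectedComponentIn F (f x) := by
  have sub : ∀ (h : (Fin m → ℝ) → (Fin m → ℝ)), Continuous h → Set.MapsTo h F F →
      ∀ y ∈ F, h '' connectedComponentIn F y ⊆ connectedComponentIn F (h y) := by
    intro h hh hhF y hy
    refine IsPreconnected.subset_connectedComponentIn ?_ ?_ ?_
    · exact isPreconnected_connectedComponentIn.image h hh.continuousOn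
    · exact Set.mem_image_of_mem h (mem_connectedComponentIn hy)
    · intro t ⟨s, hs, hst⟩
      rw [← hst]
      exact hhF (connectedComponentIn_subset F y hs)
  refine Set.Subset.antisymm (sub f hf hF x hx) ?_
  have h1 := sub g hg hG (f x) (hF hx)
  rw [hgf x] at h1
  intro t ht
  have h2 : g t ∈ connectedComponentIn F x := h1 (Set.mem_image_of_mem g ht)
  exact ⟨g t, h2, hfg t⟩

lemma cont_mulVecR {m : ℕ} (A : Matrix (Fin m) (Fin m) ℝ) :
    Continuous fun x : Fin m → ℝ => A.mulVec x := by
  refine continuous_pi fun i => ?_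
  simp only [Matrix.mulVec, dotProduct]
  exact continuous_finset_sum _ fun j _ => continuous_const.mul (continuous_apply j)

/-- Combination bound used for mixed roots. -/
lemma combine_ne {E A1 A2 s t : ℝ} (hsign : (0 < A1 ∧ 0 < A2) ∨ (A1 < 0 ∧ A2 < 0))
    (h1 : |E| < |A1|) (h2 : |E| < |A2|) (hs : 0 ≤ s) (ht : 0 ≤ t) (hst : s + t = 1) :
    E + (s * A1 + t * A2) ≠ 0 := by
  rcases hsign with ⟨hA1, hA2⟩ | ⟨hA1, hA2⟩
  · have h1' : |E| < A1 := (abs_of_pos hA1) ▸ h1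
    have h2' : |E| < A2 := (abs_of_pos hA2) ▸ h2
    have hnegE : -E ≤ |E| := neg_le_abs E
    intro hc
    rcases hs.eq_or_lt with hs0 | hs0
    · have ht1 : t = 1 := by linarith
      rw [← hs0, ht1] at hc
      nlinarith
    · have hm1 : s * |E| < s * A1 := mul_lt_mul_of_pos_left h1' hs0
      have hm2 : t * |E| ≤ t * A2 := mul_le_mul_of_nonneg_left h2'.le ht
      nlinarith
  · have h1' : A1 < -|E| := by
      have := (abs_of_neg hA1) ▸ h1
      linarith
    have h2' : A2 < -|E| := by
      have := (abs_of_neg hA2) ▸ h2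
      linarith
    have hposE : E ≤ |E| := le_abs_self E
    intro hc
    rcases hs.eq_or_lt with hs0 | hs0
    · have ht1 : t = 1 := by linarith
      rw [← hs0, ht1] at hc
      nlinarith
    · have hm1 : s * A1 < s * (-|E|) := mul_lt_mul_of_pos_left h1' hs0
      have hm2 : t * A2 ≤ t * (-|E|) := mul_le_mul_of_nonneg_left h2'.le ht
      nlinarith

end Topology

end IntLattice
namespace IntLattice

open Matrix

section Generic

variable (L : IntLattice)

lemma exists_generic (hpose : ∀ x : Fin L.n → ℤ, x ≠ 0 → 0 < L.bform x x)
    (δ : ℝ) (hδ : 0 < δ) :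
    ∃ xe : Fin L.n → ℝ, (∀ v : Fin L.n → ℤ, v ≠ 0 → L.bR xe (fun i => (v i : ℝ)) ≠ 0) ∧
      0 ≤ L.bR xe xe ∧ L.bR xe xe < δ := by
  have htr : Transcendental ℤ (liouvilleNumber 3) :=
    (liouville_liouvilleNumber (by norm_num)).transcendental
  set r := liouvilleNumber 3 with hr
  set Bf := L.B.map (Int.cast : ℤ → ℝ) with hBf
  have hdet : Bf.det ≠ 0 := by
    have h := RingHom.map_det (Int.castRingHom ℝ) L.B
    rw [show ((Int.castRingHom ℝ).mapMatrix L.B) = L.B.map (Int.cast : ℤ → ℝ) from rfl] at h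
    rw [hBf, ← h]
    intro h0
    rw [show ((Int.castRingHom ℝ) L.B.det) = ((L.B.det : ℤ) : ℝ) from rfl] at h0
    exact det_ne_zero L hpose (by exact_mod_cast h0)
  have hdetT : Bfᵀ.det ≠ 0 := by rw [Matrix.det_transpose]; exact hdet
  set w : Fin L.n → ℝ := fun i => r^(i.1+1) with hwdef
  set x₀ := (Bfᵀ)⁻¹.mulVec w with hx₀
  have hBx : Bfᵀ.mulVec x₀ = w := by
    rw [hx₀, Matrix.mulVec_mulVec, Matrix.mul_nonsing_inv _ (isUnit_iff_ne_zero.mpr hdetT),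
      Matrix.one_mulVec]
  have hx₀v : ∀ u : Fin L.n → ℝ, L.bR x₀ u = dotProduct w u := by
    intro u
    show dotProduct x₀ (Bf.mulVec u) = _
    rw [dotProduct_comm, dot_transfer, hBx, dotProduct_comm]
  have hnv : ∀ v : Fin L.n → ℤ, v ≠ 0 → L.bR x₀ (fun i => (v i : ℝ)) ≠ 0 := by
    intro v hv h0
    rw [hx₀v] at h0
    obtain ⟨i₀, hi₀⟩ := Function.ne_iff.mp hv
    have hi₀' : v i₀ ≠ 0 := by simpa using hi₀
    set p : Polynomial ℤ := ∑ i, Polynomial.C (v i) * Polynomial.X^(i.1+1) with hp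
    have hpne : p ≠ 0 := by
      intro hp0
      have hc := Polynomial.finset_sum_coeff Finset.univ
        (fun i => Polynomial.C (v i) * Polynomial.X^(i.1+1)) (i₀.1+1)
      rw [← hp, hp0] at hc
      simp only [Polynomial.coeff_zero] at hc
      rw [Finset.sum_eq_single i₀] at hc
      · rw [Polynomial.coeff_C_mul, Polynomial.coeff_X_pow] at hc
        simp at hc
        exact hi₀' hc.symm
      · intro b _ hb
        rw [Polynomial.coeff_C_mul, Polynomial.coeff_X_pow, if_neg
          (fun hcontra => hb (Fin.ext (by omega : b.1 = i₀.1)))]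
        exact mul_zero _
      · intro hmem
        exact absurd (Finset.mem_univ i₀) hmem
    have haeval : (Polynomial.aeval r) p = dotProduct w (fun i => ((v i : ℤ) : ℝ)) := by
      rw [hp, map_sum]
      refine Finset.sum_congr rfl fun i _ => ?_
      simp only [_root_.map_mul, _root_.map_pow, Polynomial.aeval_C, Polynomial.aeval_X,
        algebraMap_int_eq, eq_intCast, hwdef, map_intCast]
      ring
    exact htr ⟨p, hpne, by rw [haeval, h0]⟩
  have hq0 : 0 ≤ L.bR x₀ x₀ := bR_psd L hpose x₀
  set q0 := L.bR x₀ x₀ with hq0def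
  have hpos' : 0 < δ / (q0 + 1) := by positivity
  set tt := Real.sqrt (δ / (q0 + 1)) with htt
  have httpos : 0 < tt := Real.sqrt_pos.mpr hpos'
  have htt2 : tt^2 = δ / (q0 + 1) := Real.sq_sqrt hpos'.le
  refine ⟨tt • x₀, fun v hv => ?_, ?_, ?_⟩
  · rw [bR_smul_left']
    exact mul_ne_zero httpos.ne' (hnv v hv)
  · rw [bR_smul_left', bR_smul_right]
    nlinarith
  · rw [bR_smul_left', bR_smul_right]
    have : tt * (tt * q0) = (δ / (q0+1)) * q0 := by
      rw [← htt2]; ring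
    rw [this]
    rw [div_mul_eq_mul_div, div_lt_iff₀ (by linarith)]
    nlinarith

end Generic

section ConeInv

variable (L : IntLattice)

lemma isometry_symm (g : (Fin L.n → ℤ) ≃ₗ[ℤ] (Fin L.n → ℤ)) (hg : L.IsIsometry g) :
    L.IsIsometry g.symm := by
  intro x y
  have h := hg (g.symm x) (g.symm y)
  rw [LinearEquiv.apply_symm_apply, LinearEquiv.apply_symm_apply] at h
  exact h.symm

lemma root_map (g : (Fin L.n → ℤ) ≃ₗ[ℤ] (Fin L.n → ℤ)) (hg : L.IsIsometry g)
    (v : Fin L.n → ℤ) (hv : L.IsRoot v) : L.IsRoot (g v) := by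
  rcases hv with h | ⟨h6, hdvd⟩
  · exact Or.inl (by rw [IsTwoRoot, hg v v]; exact h)
  · refine Or.inr ⟨by rw [hg v v]; exact h6, fun x => ?_⟩
    have := hg v (g.symm x)
    rw [LinearEquiv.apply_symm_apply] at this
    rw [this]
    exact hdvd _

lemma bR_invariant (g : (Fin L.n → ℤ) ≃ₗ[ℤ] (Fin L.n → ℤ)) (hg : L.IsIsometry g)
    (x y : Fin L.n → ℝ) :
    L.bR (L.mapR g.toLinearMap x) (L.mapR g.toLinearMap y) = L.bR x y := by
  set A := L.matOf g.toLinearMap with hA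
  set Af := A.map (Int.cast : ℤ → ℝ) with hAf
  have hgram : Afᵀ * (L.B.map (Int.cast : ℤ → ℝ)) * Af = L.B.map (Int.cast : ℤ → ℝ) := by
    have h := gram_invariance L g hg
    have h2 := congrArg (fun M => M.map ((Int.castRingHom ℝ) : ℤ → ℝ)) h
    rw [Matrix.map_mul, Matrix.map_mul] at h2
    have h3 : (L.matOf g.toLinearMap)ᵀ.map (Int.cast : ℤ → ℝ) * L.B.map (Int.cast : ℤ → ℝ) *
        (L.matOf g.toLinearMap).map (Int.cast : ℤ → ℝ) = L.B.map (Int.cast : ℤ → ℝ) := h2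
    rw [hAf, hA, ← Matrix.transpose_map]
    exact h3
  show L.bR (Af.mulVec x) (Af.mulVec y) = _
  show dotProduct (Af.mulVec x) ((L.B.map (Int.cast : ℤ → ℝ)).mulVec (Af.mulVec y)) = _
  rw [dot_transfer, Matrix.mulVec_mulVec, Matrix.mulVec_mulVec, hgram]
  rfl

lemma mapR_cast (g : (Fin L.n → ℤ) ≃ₗ[ℤ] (Fin L.n → ℤ)) (v : Fin L.n → ℤ) :
    L.mapR g.toLinearMap (fun i => (v i : ℝ)) = fun i => ((g v) i : ℝ) := by
  show ((L.matOf g.toLinearMap).map (Int.cast : ℤ → ℝ)).mulVec (fun i => (v i : ℝ)) = _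
  rw [← cast_mulVec, matOf_mulVec]
  rfl

lemma mapR_mem_negCone (g : (Fin L.n → ℤ) ≃ₗ[ℤ] (Fin L.n → ℤ)) (hg : L.IsIsometry g)
    {z : Fin L.n → ℝ} (hz : z ∈ L.negCone) : L.mapR g.toLinearMap z ∈ L.negCone := by
  obtain ⟨hq, hroots⟩ := hz
  constructor
  · rw [bR_invariant L g hg]
    exact hq
  · intro v hv
    have hsymm := isometry_symm L g hg
    have hvr : L.IsRoot (g.symm v) := root_map L g.symm hsymm v hv
    have hcast : (fun i => (v i : ℝ)) = L.mapR g.toLinearMap (fun i => ((g.symm v) i : ℝ)) := by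
      rw [mapR_cast]
      simp only [LinearEquiv.apply_symm_apply]
    rw [hcast, bR_invariant L g hg]
    exact hroots _ hvr

lemma cont_mapR (g : (Fin L.n → ℤ) →ₗ[ℤ] (Fin L.n → ℤ)) : Continuous (L.mapR g) :=
  cont_mulVecR _

end ConeInv

section RootSplit

variable (Le Lh : IntLattice)

lemma bform_zero_right (L : IntLattice) (x : Fin L.n → ℤ) : L.bform x 0 = 0 := by
  simp [bform, Matrix.mulVec_zero]

lemma bform_smul_right (L : IntLattice) (c : ℤ) (x y : Fin L.n → ℤ) :
    L.bform x (c • y) = c * L.bform x y := by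
  show dotProduct x (L.B.mulVec (c • y)) = _
  rw [Matrix.mulVec_smul, dotProduct_smul, smul_eq_mul]
  rfl

lemma intQ_mem (q : ℚ) : q ∈ intQ ↔ ∃ m : ℤ, q = (m : ℚ) := by
  rw [intQ, Submodule.mem_span_singleton]
  constructor
  · rintro ⟨a, ha⟩
    exact ⟨a, by rw [← ha]; simp [zsmul_eq_mul]⟩
  · rintro ⟨m, hm⟩
    exact ⟨m, by rw [hm]; simp [zsmul_eq_mul]⟩

lemma root_split (hevene : Le.IsEvenLat) (hevenh : Lh.IsEvenLat)
    (hpose : ∀ x : Fin Le.n → ℤ, x ≠ 0 → 0 < Le.bform x x)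
    (h2l : ∀ y ∈ Le.dual, (2:ℤ) • y ∈ Le.latt)
    (v : Fin (Le + Lh).n → ℤ) (hv : (Le + Lh).IsRoot v) :
    ((spl v).2 = 0 → (spl v).1 ≠ 0) ∧
    ((spl v).1 = 0 → Lh.IsRoot (spl v).2) ∧
    ((spl v).1 ≠ 0 → (spl v).2 ≠ 0 →
      (Le.bform (spl v).1 (spl v).1 = 2 ∧ Lh.bform (spl v).2 (spl v).2 = 0) ∨
      (Lh.bform (spl v).2 (spl v).2 ≤ -2 ∧
        Le.bform (spl v).1 (spl v).1 ≤ 2 * (-(Lh.bform (spl v).2 (spl v).2)))) := by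
  set v1 := (spl v).1 with hv1d
  set v2 := (spl v).2 with hv2d
  have hsplit : (Le + Lh).bform v v = Le.bform v1 v1 + Lh.bform v2 v2 := by
    conv_lhs => rw [← glue_spl v]
    exact bform_glue Le Lh (spl v) (spl v)
  set qe := Le.bform v1 v1 with hqe
  set qh := Lh.bform v2 v2 with hqh
  have hqe_even : Even qe := hevene v1
  have hqh_even : Even qh := hevenh v2
  have hqe_pos : v1 ≠ 0 → 2 ≤ qe := by
    intro h
    obtain ⟨c, hc⟩ := hqe_even
    have := hpose v1 h
    omega
  have hqe_zero : v1 = 0 → qe = 0 := fun h => by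
    rw [hqe, h]; exact bform_zero_left Le 0
  have hqh_zero : v2 = 0 → qh = 0 := fun h => by
    rw [hqh, h]; exact bform_zero_left Lh 0
  have hdivh : (∀ x : Fin (Le + Lh).n → ℤ, (3:ℤ) ∣ (Le + Lh).bform v x) →
      ∀ x2 : Fin Lh.n → ℤ, (3:ℤ) ∣ Lh.bform v2 x2 := by
    intro hdvd x2
    have h := hdvd (glue (0, x2))
    have heq : (Le + Lh).bform v (glue (0, x2)) = Lh.bform v2 x2 := by
      conv_lhs => rw [← glue_spl v]
      rw [bform_glue, bform_zero_right]
      ring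
    rwa [heq] at h
  have hkey : (∀ x : Fin (Le + Lh).n → ℤ, (3:ℤ) ∣ (Le + Lh).bform v x) → v1 ≠ 0 → 18 ≤ qe := by
    intro hdvd hne
    have hdive : ∀ x1 : Fin Le.n → ℤ, (3:ℤ) ∣ Le.bform v1 x1 := by
      intro x1
      have h := hdvd (glue (x1, 0))
      have heq : (Le + Lh).bform v (glue (x1, 0)) = Le.bform v1 x1 := by
        conv_lhs => rw [← glue_spl v]
        rw [bform_glue, bform_zero_right]
        ring
      rwa [heq] at h
    set y1 : Fin Le.n → ℚ := fun i => (v1 i : ℚ)/3 with hy1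
    have h13 : y1 = (3 : ℚ)⁻¹ • (fun i => ((v1 i : ℤ) : ℚ)) := by
      funext i
      simp only [hy1, Pi.smul_apply, smul_eq_mul]
      ring
    have hy1dual : y1 ∈ Le.dual := by
      intro x
      obtain ⟨k, hk⟩ := hdive x
      have heq : Le.bQ y1 (fun i => (x i : ℚ)) = (k : ℚ) := by
        have hsm : Le.bQ y1 (fun i => (x i : ℚ)) =
            (3:ℚ)⁻¹ * Le.bQ (fun i => ((v1 i : ℤ) : ℚ)) (fun i => (x i : ℚ)) := by
          rw [h13]
          show dotProduct ((3:ℚ)⁻¹ • _) _ = _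
          rw [smul_dotProduct]
          rfl
        rw [hsm, bQ_cast, hk]
        push_cast
        ring
      rw [heq]
      exact (intQ_mem _).mpr ⟨k, rfl⟩
    have h2y := h2l y1 hy1dual
    have hv13 : ∀ i, (3:ℤ) ∣ v1 i := by
      intro i
      have hmem : ((2:ℤ) • y1) i ∈ intQ := by
        rw [latt] at h2y
        exact Submodule.mem_pi.mp h2y i (Set.mem_univ i)
      obtain ⟨m, hm⟩ := (intQ_mem _).mp hmem
      have : ((2 * v1 i : ℤ) : ℚ) = ((3 * m : ℤ) : ℚ) := by
        push_cast
        have : (2:ℚ) * ((v1 i : ℚ)/3) = (m:ℚ) := by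
          rw [← hm]
          simp [hy1, zsmul_eq_mul]
          try ring
        nlinarith [this]
      have h23 : (2:ℤ) * v1 i = 3 * m := by exact_mod_cast this
      omega
    set w : Fin Le.n → ℤ := fun i => v1 i / 3 with hwd
    have hv1w : v1 = (3:ℤ) • w := by
      funext i
      simp only [hwd, Pi.smul_apply, smul_eq_mul]
      exact (Int.mul_ediv_cancel' (hv13 i)).symm
    have hwne : w ≠ 0 := by
      intro h
      apply hne
      rw [hv1w, h, smul_zero]
    have hqw : 2 ≤ Le.bform w w := by
      obtain ⟨c, hc⟩ := hevene w
      have := hpose w hwne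
      omega
    have : qe = 9 * Le.bform w w := by
      rw [hqe, hv1w, bform_smul_left, bform_smul_right]
      simp only [smul_eq_mul]
      ring
    omega
  rcases hv with h2r | ⟨h6, hdvd⟩
  · rw [IsTwoRoot, hsplit] at h2r
    obtain ⟨ce, hce⟩ := hqe_even
    obtain ⟨ch, hch⟩ := hqh_even
    refine ⟨fun h20 h10 => ?_, fun h10 => ?_, fun h1 h2 => ?_⟩
    · have := hqe_zero h10
      have := hqh_zero h20
      omega
    · have := hqe_zero h10
      exact Or.inl (by rw [IsTwoRoot]; omega)
    · have hqe2 := hqe_pos h1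
      rcases eq_or_ne qh 0 with hq0 | hq0
      · exact Or.inl ⟨by omega, hq0⟩
      · exact Or.inr ⟨by omega, by omega⟩
  · rw [hsplit] at h6
    refine ⟨fun h20 h10 => ?_, fun h10 => ?_, fun h1 h2 => ?_⟩
    · have := hqe_zero h10
      have := hqh_zero h20
      omega
    · have := hqe_zero h10
      exact Or.inr ⟨by omega, hdivh hdvd⟩
    · have h18 := hkey hdvd h1
      exact Or.inr ⟨by omega, by omega⟩

end RootSplit


end IntLattice
namespace IntLattice

open Matrix

lemma mapR_inverse (L : IntLattice) (g : (Fin L.n → ℤ) ≃ₗ[ℤ] (Fin L.n → ℤ)) :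
    ∀ x : Fin L.n → ℝ, L.mapR g.symm.toLinearMap (L.mapR g.toLinearMap x) = x := by
  intro x
  show ((L.matOf g.symm.toLinearMap).map ⇑(Int.castRingHom ℝ)).mulVec
    (((L.matOf g.toLinearMap).map ⇑(Int.castRingHom ℝ)).mulVec x) = x
  rw [Matrix.mulVec_mulVec, ← Matrix.map_mul, matOf_mul_matOf]
  have h1 : g.symm.toLinearMap.comp g.toLinearMap = LinearMap.id := by ext v; simp
  rw [h1, show L.matOf LinearMap.id = (1 : Matrix (Fin L.n) (Fin L.n) ℤ) from
    matOf_unique L _ _ (fun v => by simp), Matrix.map_one _ (by simp) (by simp),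
    Matrix.one_mulVec]

end IntLattice
set_option maxHeartbeats 2000000 in
open IntLattice in
/-- achirality is inherited by extensions by 2-root generated lattices. -/
theorem statement_2 (Lh Le : IntLattice)
    (hsymmh : Lh.IsSymmLat) (hndh : Lh.Nondeg) (hevenh : Lh.IsEvenLat)
    (hsigh : Lh.negIndexEq 1)
    (h3h : Nat.card (Submodule.torsionBy ℤ Lh.discrG 3) = 3)
    (hach : Lh.Achiral)
    (hsymme : Le.IsSymmLat) (hevene : Le.IsEvenLat)
    (hpose : ∀ x : Fin Le.n → ℤ, x ≠ 0 → 0 < Le.bform x x)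
    (hgen : Submodule.span ℤ {v : Fin Le.n → ℤ | Le.bform v v = 2} = ⊤)
    (h2e : ∀ x : Le.discrG, (2 : ℤ) • x = 0) :
    (Le + Lh).Achiral := by
  classical
  obtain ⟨gh, hgh_iso, ⟨xh, hxh_mem, hcomp⟩, hneg3⟩ := hach
  obtain ⟨hL1, hL2⟩ := lorentz_package Lh hsymmh hndh hsigh
  set yh := Lh.mapR gh.toLinearMap xh with hyh
  have hxh_conn : xh ∈ connectedComponentIn Lh.negCone xh := mem_connectedComponentIn hxh_mem
  have hyh_conn : yh ∈ connectedComponentIn Lh.negCone xh := by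
    rw [← hcomp]; exact Set.mem_image_of_mem _ hxh_conn
  have hyh_mem : yh ∈ Lh.negCone := connectedComponentIn_subset _ _ hyh_conn
  have hpre : IsPreconnected (connectedComponentIn Lh.negCone xh) :=
    isPreconnected_connectedComponentIn
  have hqxh : Lh.bR xh xh < 0 := hxh_mem.1
  have hqyh : Lh.bR yh yh < 0 := hyh_mem.1
  have hnz_xh : ∀ z ∈ Lh.negCone, Lh.bR xh z ≠ 0 := by
    intro z hz h
    have h' : Lh.bR z xh = 0 := by rw [bR_comm Lh hsymmh]; exact h
    have hx0 := hL2 z xh hz.1 h' hqxh.le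
    rw [hx0] at hqxh
    have : Lh.bR 0 0 = (0:ℝ) := zero_dotProduct _
    linarith
  have hbxy : Lh.bR xh yh < 0 :=
    sign_const hpre (cont_bR_right Lh xh)
      (fun s hs => hnz_xh s (connectedComponentIn_subset _ _ hs)) hxh_conn hyh_conn hqxh
  obtain ⟨ε1, hε1, hε1b⟩ := isotropic_bound Lh hsymmh hndh hsigh xh hqxh
  obtain ⟨ε2, hε2, hε2b⟩ := isotropic_bound Lh hsymmh hndh hsigh yh hqyh
  set εm := min ε1 ε2 with hεmdef
  have hεm : 0 < εm := lt_min hε1 hε2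
  set c1 := min (-(Lh.bR xh xh)) (-(Lh.bR yh yh)) with hc1
  have hc1p : 0 < c1 := lt_min (by linarith) (by linarith)
  set c0 := min c1 (-(Lh.bR xh yh)) with hc0
  have hc0p : 0 < c0 := lt_min hc1p (by linarith)
  set δ := min c0 (min (c1/2) (εm^2/2)) with hδdef
  have hδp : 0 < δ := lt_min hc0p (lt_min (by linarith) (by positivity))
  obtain ⟨xe, hgenxe, hqxe0, hqxeδ⟩ := exists_generic Le hpose δ hδp
  have h2l : ∀ y ∈ Le.dual, (2:ℤ) • y ∈ Le.latt := by
    intro y hy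
    have h := h2e (Submodule.Quotient.mk ⟨y, hy⟩)
    rw [← Submodule.Quotient.mk_smul, Submodule.Quotient.mk_eq_zero] at h
    exact Submodule.mem_comap.mp h
  have hsign_of : ∀ v2 : Fin Lh.n → ℤ,
      (∀ z ∈ Lh.negCone, Lh.bR z (fun i => (v2 i : ℝ)) ≠ 0) →
      (0 < Lh.bR xh (fun i => (v2 i : ℝ)) ∧ 0 < Lh.bR yh (fun i => (v2 i : ℝ))) ∨
      (Lh.bR xh (fun i => (v2 i : ℝ)) < 0 ∧ Lh.bR yh (fun i => (v2 i : ℝ)) < 0) := by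
    intro v2 hnz
    rcases (hnz xh hxh_mem).lt_or_gt with hneg | hpos
    · exact Or.inr ⟨hneg, sign_const hpre (cont_bR_left Lh _)
        (fun z hz => hnz z (connectedComponentIn_subset _ _ hz)) hxh_conn hyh_conn hneg⟩
    · refine Or.inl ⟨hpos, ?_⟩
      by_contra hcon
      have hyneg : Lh.bR yh (fun i => (v2 i : ℝ)) < 0 :=
        lt_of_le_of_ne (not_lt.mp hcon) (hnz yh hyh_mem)
      have h := sign_const hpre (cont_bR_left Lh _)
        (fun z hz => hnz z (connectedComponentIn_subset _ _ hz)) hyh_conn hxh_conn hyneg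
      linarith
  -- the segment estimate
  have hseg : ∀ w ∈ segment ℝ xh yh, glue (xe, w) ∈ (Le + Lh).negCone := by
    rintro w ⟨s, t, hs, ht, hst, rfl⟩
    have hsq : s^2 + 2*s*t + t^2 = 1 := by nlinarith [hst]
    have hc0c1 : c0 ≤ c1 := min_le_left _ _
    have hc1x : c1 ≤ -(Lh.bR xh xh) := min_le_left _ _
    have hc1y : c1 ≤ -(Lh.bR yh yh) := min_le_right _ _
    have hc0xy : c0 ≤ -(Lh.bR xh yh) := min_le_right _ _
    have hqw : Lh.bR (s•xh + t•yh) (s•xh + t•yh) ≤ -c0 := by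
      rw [bR_expand Lh hsymmh]
      have e1 : s^2 * Lh.bR xh xh ≤ s^2 * (-c0) :=
        mul_le_mul_of_nonneg_left (by linarith) (sq_nonneg s)
      have e2 : 2*s*t*(Lh.bR xh yh) ≤ 2*s*t*(-c0) :=
        mul_le_mul_of_nonneg_left (by linarith) (by positivity)
      have e3 : t^2 * Lh.bR yh yh ≤ t^2 * (-c0) :=
        mul_le_mul_of_nonneg_left (by linarith) (sq_nonneg t)
      nlinarith [e1, e2, e3]
    refine ⟨?_, ?_⟩
    · show (Le + Lh).bR (glue (xe, s•xh + t•yh)) (glue (xe, s•xh + t•yh)) < 0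
      rw [bR_glue]
      have hδc0 : δ ≤ c0 := min_le_left _ _
      linarith
    · intro v hv
      obtain ⟨hpart1, hpart2, hpart3⟩ := root_split Le Lh hevene hevenh hpose h2l v hv
      have hc : (fun (i : Fin (Le + Lh).n) => ((v i : ℤ) : ℝ)) =
          glue ((fun i => ((spl v).1 i : ℝ)), (fun j => ((spl v).2 j : ℝ))) := by
        have h1 := glue_map (Int.cast : ℤ → ℝ) (spl v)
        rw [glue_spl] at h1
        exact h1
      have hbrv : (Le + Lh).bR (glue (xe, s•xh + t•yh)) (fun i => ((v i : ℤ) : ℝ)) =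
          Le.bR xe (fun i => ((spl v).1 i : ℝ)) +
            Lh.bR (s•xh + t•yh) (fun j => ((spl v).2 j : ℝ)) := by
        rw [hc, bR_glue]
      rw [hbrv]
      by_cases hv2 : (spl v).2 = 0
      · have hv1 : (spl v).1 ≠ 0 := hpart1 hv2
        have hz2 : Lh.bR (s•xh + t•yh) (fun j => ((spl v).2 j : ℝ)) = 0 := by
          rw [show (fun j => (((spl v).2 j : ℤ) : ℝ)) = (0 : Fin Lh.n → ℝ) by
            funext j; rw [hv2]; simp]
          exact bR_zero_right Lh _
        rw [hz2, add_zero]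
        exact hgenxe _ hv1
      · have hsplit_second : Lh.bR (s•xh + t•yh) (fun j => ((spl v).2 j : ℝ)) =
            s * Lh.bR xh (fun j => ((spl v).2 j : ℝ)) +
            t * Lh.bR yh (fun j => ((spl v).2 j : ℝ)) := by
          rw [bR_add_left', bR_smul_left', bR_smul_left']
        by_cases hv1 : (spl v).1 = 0
        · have hroot := hpart2 hv1
          have hz1 : Le.bR xe (fun i => ((spl v).1 i : ℝ)) = 0 := by
            rw [show (fun i => (((spl v).1 i : ℤ) : ℝ)) = (0 : Fin Le.n → ℝ) by
              funext i; rw [hv1]; simp]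
            exact bR_zero_right Le _
          have hnzv : ∀ z ∈ Lh.negCone, Lh.bR z (fun j => ((spl v).2 j : ℝ)) ≠ 0 :=
            fun z hz => hz.2 _ hroot
          have hsign := hsign_of _ hnzv
          have hA1 : |(0:ℝ)| < |Lh.bR xh (fun j => ((spl v).2 j : ℝ))| := by
            rw [abs_zero]
            exact abs_pos.mpr (hnzv xh hxh_mem)
          have hA2 : |(0:ℝ)| < |Lh.bR yh (fun j => ((spl v).2 j : ℝ))| := by
            rw [abs_zero]
            exact abs_pos.mpr (hnzv yh hyh_mem)
          have := combine_ne hsign hA1 hA2 hs ht hst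
          rw [hz1, hsplit_second]
          simpa using this
        · -- mixed root
          have hnz0 : (fun j => (((spl v).2 j : ℤ) : ℝ)) ≠ 0 := by
            intro h
            apply hv2
            funext j
            have := congrFun h j
            simpa using this
          have hcs := cauchy_schwarz Le hsymme (fun z => bR_psd Le hpose z) xe
            (fun i => ((spl v).1 i : ℝ))
          have hqv1cast : Le.bR (fun i => ((spl v).1 i : ℝ)) (fun i => ((spl v).1 i : ℝ)) =
              ((Le.bform (spl v).1 (spl v).1 : ℤ) : ℝ) := bR_cast Le _ _
          have hqv2cast : Lh.bR (fun j => ((spl v).2 j : ℝ)) (fun j => ((spl v).2 j : ℝ)) =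
              ((Lh.bform (spl v).2 (spl v).2 : ℤ) : ℝ) := bR_cast Lh _ _
          rcases hpart3 hv1 hv2 with ⟨hqe2, hqh0⟩ | ⟨hqh2, hqele⟩
          · -- isotropic case
            have hqv2R : Lh.bR (fun j => ((spl v).2 j : ℝ)) (fun j => ((spl v).2 j : ℝ)) = 0 := by
              rw [hqv2cast, hqh0]; simp
            have hnzv : ∀ z ∈ Lh.negCone, Lh.bR z (fun j => ((spl v).2 j : ℝ)) ≠ 0 := by
              intro z hz hzero
              exact hnz0 (hL2 z _ hz.1 hzero hqv2R.le)
            have hsign := hsign_of _ hnzv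
            have hδεm : δ ≤ εm^2/2 := le_trans (min_le_right _ _) (min_le_right _ _)
            have hE2 : (Le.bR xe (fun i => ((spl v).1 i : ℝ)))^2 < εm^2 := by
              rw [hqv1cast, hqe2] at hcs
              push_cast at hcs
              nlinarith
            have hE : |Le.bR xe (fun i => ((spl v).1 i : ℝ))| < εm := by
              nlinarith [sq_abs (Le.bR xe (fun i => ((spl v).1 i : ℝ))),
                abs_nonneg (Le.bR xe (fun i => ((spl v).1 i : ℝ)))]
            have hA1 : εm ≤ |Lh.bR xh (fun j => ((spl v).2 j : ℝ))| :=
              le_trans (min_le_left _ _) (hε1b _ hv2 hqv2R)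
            have hA2 : εm ≤ |Lh.bR yh (fun j => ((spl v).2 j : ℝ))| :=
              le_trans (min_le_right _ _) (hε2b _ hv2 hqv2R)
            rw [hsplit_second]
            exact combine_ne hsign (lt_of_lt_of_le hE hA1) (lt_of_lt_of_le hE hA2) hs ht hst
          · -- timelike case
            set mz : ℤ := -(Lh.bform (spl v).2 (spl v).2) with hmz
            have hm2 : 2 ≤ mz := by omega
            have hqv2R : Lh.bR (fun j => ((spl v).2 j : ℝ)) (fun j => ((spl v).2 j : ℝ)) =
                -(mz : ℝ) := by
              rw [hqv2cast, hmz]; push_cast; ring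
            have hqv2le : Lh.bR (fun j => ((spl v).2 j : ℝ)) (fun j => ((spl v).2 j : ℝ)) ≤ 0 := by
              rw [hqv2R]
              have : (2:ℝ) ≤ (mz:ℝ) := by exact_mod_cast hm2
              linarith
            have hnzv : ∀ z ∈ Lh.negCone, Lh.bR z (fun j => ((spl v).2 j : ℝ)) ≠ 0 := by
              intro z hz hzero
              exact hnz0 (hL2 z _ hz.1 hzero hqv2le)
            have hsign := hsign_of _ hnzv
            have hmzR : (2:ℝ) ≤ (mz:ℝ) := by exact_mod_cast hm2
            have htb1 := timelike_bound Lh hsymmh hndh hsigh xh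
              (fun j => ((spl v).2 j : ℝ)) hqxh hqv2le
            have htb2 := timelike_bound Lh hsymmh hndh hsigh yh
              (fun j => ((spl v).2 j : ℝ)) hqyh hqv2le
            rw [hqv2R] at htb1 htb2
            have hE2 : (Le.bR xe (fun i => ((spl v).1 i : ℝ)))^2 < c1 * (mz:ℝ) := by
              have hqv1le : Le.bR (fun i => ((spl v).1 i : ℝ)) (fun i => ((spl v).1 i : ℝ)) ≤
                  2 * (mz:ℝ) := by
                rw [hqv1cast]
                have : Le.bform (spl v).1 (spl v).1 ≤ 2 * mz := by omega
                exact_mod_cast this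
              have hδc1 : δ ≤ c1/2 := le_trans (min_le_right _ _) (min_le_left _ _)
              have hqv1pos : 0 ≤ Le.bR (fun i => ((spl v).1 i : ℝ))
                  (fun i => ((spl v).1 i : ℝ)) := bR_psd Le hpose _
              nlinarith
            have hA1sq : c1 * (mz:ℝ) ≤ (Lh.bR xh (fun j => ((spl v).2 j : ℝ)))^2 := by
              have h1 : c1 ≤ -(Lh.bR xh xh) := min_le_left _ _
              nlinarith
            have hA2sq : c1 * (mz:ℝ) ≤ (Lh.bR yh (fun j => ((spl v).2 j : ℝ)))^2 := by
              have h1 : c1 ≤ -(Lh.bR yh yh) := min_le_right _ _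
              nlinarith
            have hEA1 : |Le.bR xe (fun i => ((spl v).1 i : ℝ))| <
                |Lh.bR xh (fun j => ((spl v).2 j : ℝ))| := by
              nlinarith [sq_abs (Le.bR xe (fun i => ((spl v).1 i : ℝ))),
                sq_abs (Lh.bR xh (fun j => ((spl v).2 j : ℝ))),
                abs_nonneg (Le.bR xe (fun i => ((spl v).1 i : ℝ))),
                abs_nonneg (Lh.bR xh (fun j => ((spl v).2 j : ℝ)))]
            have hEA2 : |Le.bR xe (fun i => ((spl v).1 i : ℝ))| <
                |Lh.bR yh (fun j => ((spl v).2 j : ℝ))| := by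
              nlinarith [sq_abs (Le.bR xe (fun i => ((spl v).1 i : ℝ))),
                sq_abs (Lh.bR yh (fun j => ((spl v).2 j : ℝ))),
                abs_nonneg (Le.bR xe (fun i => ((spl v).1 i : ℝ))),
                abs_nonneg (Lh.bR yh (fun j => ((spl v).2 j : ℝ)))]
            rw [hsplit_second]
            exact combine_ne hsign hEA1 hEA2 hs ht hst
  -- assemble
  refine ⟨gsum Le Lh gh, gsum_isometry Le Lh gh hgh_iso, ?_, ?_⟩
  · set z₀ : Fin (Le.n + Lh.n) → ℝ := glue (xe, xh) with hz₀
    have hz₀F : z₀ ∈ (Le + Lh).negCone := hseg xh (left_mem_segment ℝ xh yh)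
    refine ⟨z₀, hz₀F, ?_⟩
    set T : Set (Fin (Le.n + Lh.n) → ℝ) := (fun w => glue (xe, w)) '' segment ℝ xh yh with hT
    have hTsub : T ⊆ (Le + Lh).negCone := by
      rintro _ ⟨w, hw, rfl⟩
      exact hseg w hw
    have hcontglue : Continuous fun w : Fin Lh.n → ℝ => (glue (xe, w) : Fin (Le.n + Lh.n) → ℝ) := by
      refine continuous_pi fun i => ?_
      show Continuous fun w : Fin Lh.n → ℝ => Sum.elim xe w (finSumFinEquiv.symm i)
      rcases finSumFinEquiv.symm i with s | s
      · exact continuous_const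
      · exact continuous_apply s
    have hTpre : IsPreconnected T :=
      (convex_segment xh yh).isPreconnected.image _ hcontglue.continuousOn
    have hz₀T : z₀ ∈ T := ⟨xh, left_mem_segment ℝ xh yh, rfl⟩
    have hTC : T ⊆ connectedComponentIn (Le + Lh).negCone z₀ :=
      hTpre.subset_connectedComponentIn hz₀T hTsub
    have hz₁ : (Le + Lh).mapR (gsum Le Lh gh).toLinearMap z₀ = glue (xe, yh) := by
      rw [hz₀]
      exact mapR_gsum_glue Le Lh gh (xe, xh)
    have hz₁C : (Le + Lh).mapR (gsum Le Lh gh).toLinearMap z₀ ∈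
        connectedComponentIn (Le + Lh).negCone z₀ := by
      rw [hz₁]
      exact hTC ⟨yh, right_mem_segment ℝ xh yh, rfl⟩
    have hiso := gsum_isometry Le Lh gh hgh_iso
    have hiso_symm : (Le + Lh).IsIsometry (gsum Le Lh gh).symm :=
      isometry_symm _ _ hiso
    have hinv1 := mapR_inverse (Le + Lh) (gsum Le Lh gh)
    have hinv2 : ∀ x, (Le + Lh).mapR (gsum Le Lh gh).toLinearMap
        ((Le + Lh).mapR (gsum Le Lh gh).symm.toLinearMap x) = x := by
      have h := mapR_inverse (Le + Lh) (gsum Le Lh gh).symm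
      intro x
      have := h x
      rwa [show (gsum Le Lh gh).symm.symm = gsum Le Lh gh from rfl] at this
    have himg := image_connCompIn (F := (Le + Lh).negCone)
      (cont_mapR (Le + Lh) (gsum Le Lh gh).toLinearMap)
      (cont_mapR (Le + Lh) (gsum Le Lh gh).symm.toLinearMap)
      hinv1 hinv2
      (fun z hz => mapR_mem_negCone (Le + Lh) (gsum Le Lh gh) hiso hz)
      (fun z hz => mapR_mem_negCone (Le + Lh) (gsum Le Lh gh).symm hiso_symm hz)
      hz₀F
    rw [himg]
    exact (connectedComponentIn_eq hz₁C).symm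
  · intro y hy h3y
    obtain ⟨hy1, hy2⟩ := spl_dual Le Lh hy
    obtain ⟨h3y1, h3y2⟩ := spl_smul_latt Le Lh h3y
    have hmap : (Le + Lh).mapQ (gsum Le Lh gh).toLinearMap y =
        glue ((spl y).1, Lh.mapQ gh.toLinearMap (spl y).2) := by
      conv_lhs => rw [← glue_spl y]
      exact mapQ_gsum_glue Le Lh gh (spl y)
    have hsum : (Le + Lh).mapQ (gsum Le Lh gh).toLinearMap y + y =
        glue ((spl y).1 + (spl y).1, Lh.mapQ gh.toLinearMap (spl y).2 + (spl y).2) := by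
      rw [hmap]
      set p := spl y with hp
      rw [show y = glue p from (glue_spl y).symm, glue_add]
      rfl
    rw [hsum, glue_mem_latt]
    constructor
    · have h := h2l (spl y).1 hy1
      rwa [two_smul] at h
    · exact hneg3 (spl y).2 hy2 h3y2
end

section
/- The lattice U(2)+E₆(2) contains no 2-roots and no 6-roots, and it is achiral. -/
open IntLattice

namespace Statement5

def B8 : Matrix (Fin 8) (Fin 8) ℤ :=
  !![0,2,0,0,0,0,0,0;
     2,0,0,0,0,0,0,0;
     0,0,4,-2,0,0,0,0;
     0,0,-2,4,-2,0,0,0;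
     0,0,0,-2,4,-2,0,-2;
     0,0,0,0,-2,4,-2,0;
     0,0,0,0,0,-2,4,0;
     0,0,0,0,-2,0,0,4]

def sgn : Fin 8 → ℤ := ![1,1,-1,-1,-1,-1,-1,-1]

def x0 : Fin 8 → ℝ := ![1,-1,0,0,0,0,0,0]

@[simp] lemma B8_00 : B8 0 0 = (0:ℤ) := rfl
@[simp] lemma B8_01 : B8 0 1 = (2:ℤ) := rfl
@[simp] lemma B8_02 : B8 0 2 = (0:ℤ) := rfl
@[simp] lemma B8_03 : B8 0 3 = (0:ℤ) := rfl
@[simp] lemma B8_04 : B8 0 4 = (0:ℤ) := rfl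
@[simp] lemma B8_05 : B8 0 5 = (0:ℤ) := rfl
@[simp] lemma B8_06 : B8 0 6 = (0:ℤ) := rfl
@[simp] lemma B8_07 : B8 0 7 = (0:ℤ) := rfl
@[simp] lemma B8_10 : B8 1 0 = (2:ℤ) := rfl
@[simp] lemma B8_11 : B8 1 1 = (0:ℤ) := rfl
@[simp] lemma B8_12 : B8 1 2 = (0:ℤ) := rfl
@[simp] lemma B8_13 : B8 1 3 = (0:ℤ) := rfl
@[simp] lemma B8_14 : B8 1 4 = (0:ℤ) := rfl
@[simp] lemma B8_15 : B8 1 5 = (0:ℤ) := rfl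
@[simp] lemma B8_16 : B8 1 6 = (0:ℤ) := rfl
@[simp] lemma B8_17 : B8 1 7 = (0:ℤ) := rfl
@[simp] lemma B8_20 : B8 2 0 = (0:ℤ) := rfl
@[simp] lemma B8_21 : B8 2 1 = (0:ℤ) := rfl
@[simp] lemma B8_22 : B8 2 2 = (4:ℤ) := rfl
@[simp] lemma B8_23 : B8 2 3 = (-2:ℤ) := rfl
@[simp] lemma B8_24 : B8 2 4 = (0:ℤ) := rfl
@[simp] lemma B8_25 : B8 2 5 = (0:ℤ) := rfl
@[simp] lemma B8_26 : B8 2 6 = (0:ℤ) := rfl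
@[simp] lemma B8_27 : B8 2 7 = (0:ℤ) := rfl
@[simp] lemma B8_30 : B8 3 0 = (0:ℤ) := rfl
@[simp] lemma B8_31 : B8 3 1 = (0:ℤ) := rfl
@[simp] lemma B8_32 : B8 3 2 = (-2:ℤ) := rfl
@[simp] lemma B8_33 : B8 3 3 = (4:ℤ) := rfl
@[simp] lemma B8_34 : B8 3 4 = (-2:ℤ) := rfl
@[simp] lemma B8_35 : B8 3 5 = (0:ℤ) := rfl
@[simp] lemma B8_36 : B8 3 6 = (0:ℤ) := rfl
@[simp] lemma B8_37 : B8 3 7 = (0:ℤ) := rfl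
@[simp] lemma B8_40 : B8 4 0 = (0:ℤ) := rfl
@[simp] lemma B8_41 : B8 4 1 = (0:ℤ) := rfl
@[simp] lemma B8_42 : B8 4 2 = (0:ℤ) := rfl
@[simp] lemma B8_43 : B8 4 3 = (-2:ℤ) := rfl
@[simp] lemma B8_44 : B8 4 4 = (4:ℤ) := rfl
@[simp] lemma B8_45 : B8 4 5 = (-2:ℤ) := rfl
@[simp] lemma B8_46 : B8 4 6 = (0:ℤ) := rfl
@[simp] lemma B8_47 : B8 4 7 = (-2:ℤ) := rfl
@[simp] lemma B8_50 : B8 5 0 = (0:ℤ) := rfl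
@[simp] lemma B8_51 : B8 5 1 = (0:ℤ) := rfl
@[simp] lemma B8_52 : B8 5 2 = (0:ℤ) := rfl
@[simp] lemma B8_53 : B8 5 3 = (0:ℤ) := rfl
@[simp] lemma B8_54 : B8 5 4 = (-2:ℤ) := rfl
@[simp] lemma B8_55 : B8 5 5 = (4:ℤ) := rfl
@[simp] lemma B8_56 : B8 5 6 = (-2:ℤ) := rfl
@[simp] lemma B8_57 : B8 5 7 = (0:ℤ) := rfl
@[simp] lemma B8_60 : B8 6 0 = (0:ℤ) := rfl
@[simp] lemma B8_61 : B8 6 1 = (0:ℤ) := rfl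
@[simp] lemma B8_62 : B8 6 2 = (0:ℤ) := rfl
@[simp] lemma B8_63 : B8 6 3 = (0:ℤ) := rfl
@[simp] lemma B8_64 : B8 6 4 = (0:ℤ) := rfl
@[simp] lemma B8_65 : B8 6 5 = (-2:ℤ) := rfl
@[simp] lemma B8_66 : B8 6 6 = (4:ℤ) := rfl
@[simp] lemma B8_67 : B8 6 7 = (0:ℤ) := rfl
@[simp] lemma B8_70 : B8 7 0 = (0:ℤ) := rfl
@[simp] lemma B8_71 : B8 7 1 = (0:ℤ) := rfl
@[simp] lemma B8_72 : B8 7 2 = (0:ℤ) := rfl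
@[simp] lemma B8_73 : B8 7 3 = (0:ℤ) := rfl
@[simp] lemma B8_74 : B8 7 4 = (-2:ℤ) := rfl
@[simp] lemma B8_75 : B8 7 5 = (0:ℤ) := rfl
@[simp] lemma B8_76 : B8 7 6 = (0:ℤ) := rfl
@[simp] lemma B8_77 : B8 7 7 = (4:ℤ) := rfl

@[simp] lemma sgn_0 : sgn 0 = (1:ℤ) := rfl
@[simp] lemma sgn_1 : sgn 1 = (1:ℤ) := rfl
@[simp] lemma sgn_2 : sgn 2 = (-1:ℤ) := rfl
@[simp] lemma sgn_3 : sgn 3 = (-1:ℤ) := rfl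
@[simp] lemma sgn_4 : sgn 4 = (-1:ℤ) := rfl
@[simp] lemma sgn_5 : sgn 5 = (-1:ℤ) := rfl
@[simp] lemma sgn_6 : sgn 6 = (-1:ℤ) := rfl
@[simp] lemma sgn_7 : sgn 7 = (-1:ℤ) := rfl

@[simp] lemma x0_0 : x0 0 = (1:ℝ) := rfl
@[simp] lemma x0_1 : x0 1 = (-1:ℝ) := rfl
@[simp] lemma x0_2 : x0 2 = (0:ℝ) := rfl
@[simp] lemma x0_3 : x0 3 = (0:ℝ) := rfl
@[simp] lemma x0_4 : x0 4 = (0:ℝ) := rfl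
@[simp] lemma x0_5 : x0 5 = (0:ℝ) := rfl
@[simp] lemma x0_6 : x0 6 = (0:ℝ) := rfl
@[simp] lemma x0_7 : x0 7 = (0:ℝ) := rfl

abbrev L : IntLattice := twist 2 latU + twist 2 latE6

lemma hB8 : L.B = B8 := by
  ext i j; fin_cases i <;> fin_cases j <;> rfl

lemma bform_eq (x y : Fin 8 → ℤ) :
    L.bform x y = dotProduct x (B8.mulVec y) := by
  unfold IntLattice.bform; rw [hB8]; rfl

lemma bR_eq (x y : Fin 8 → ℝ) :
    L.bR x y = dotProduct x ((B8.map (Int.cast : ℤ → ℝ)).mulVec y) := by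
  unfold IntLattice.bR; rw [hB8]; rfl

lemma bQ_eq (x y : Fin 8 → ℚ) :
    L.bQ x y = dotProduct x ((B8.map (Int.cast : ℤ → ℚ)).mulVec y) := by
  unfold IntLattice.bQ; rw [hB8]; rfl

lemma bform_self (v : Fin 8 → ℤ) :
    L.bform v v = 4 * (v 0 * v 1 + v 2^2 + v 3^2 + v 4^2 + v 5^2 + v 6^2 + v 7^2
      - (v 2 * v 3 + v 3 * v 4 + v 4 * v 5 + v 5 * v 6 + v 4 * v 7)) := by
  rw [bform_eq]
  simp only [Matrix.mulVec, dotProduct, Fin.sum_univ_eight, B8_00, B8_01, B8_02, B8_03,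
    B8_04, B8_05, B8_06, B8_07, B8_10, B8_11, B8_12, B8_13, B8_14, B8_15, B8_16, B8_17,
    B8_20, B8_21, B8_22, B8_23, B8_24, B8_25, B8_26, B8_27, B8_30, B8_31, B8_32, B8_33,
    B8_34, B8_35, B8_36, B8_37, B8_40, B8_41, B8_42, B8_43, B8_44, B8_45, B8_46, B8_47,
    B8_50, B8_51, B8_52, B8_53, B8_54, B8_55, B8_56, B8_57, B8_60, B8_61, B8_62, B8_63,
    B8_64, B8_65, B8_66, B8_67, B8_70, B8_71, B8_72, B8_73, B8_74, B8_75, B8_76, B8_77]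
  ring

lemma no_root (v : Fin 8 → ℤ) : ¬ L.IsRoot v := by
  have h := bform_self v
  rintro (h2 | ⟨h6, -⟩)
  · rw [h2] at h; omega
  · rw [h6] at h; omega

def gmap : (Fin 8 → ℤ) →ₗ[ℤ] (Fin 8 → ℤ) where
  toFun x := fun i => sgn i * x i
  map_add' a b := by funext i; simp [mul_add]
  map_smul' c a := by funext i; simp; ring

lemma gmap_inv : Function.Involutive gmap := by
  intro x
  funext i
  show sgn i * (sgn i * x i) = x i
  have h : sgn i * sgn i = 1 := by fin_cases i <;> decide
  rw [← mul_assoc, h, one_mul]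

def g : (Fin 8 → ℤ) ≃ₗ[ℤ] (Fin 8 → ℤ) := LinearEquiv.ofInvolutive gmap gmap_inv

lemma g_apply (x : Fin 8 → ℤ) : g x = fun i => sgn i * x i := rfl

lemma hMat : L.matOf g.toLinearMap = Matrix.diagonal sgn := by
  ext i j; fin_cases i <;> fin_cases j <;> rfl

lemma mapR_eq : L.mapR g.toLinearMap = fun (y : Fin 8 → ℝ) i => (sgn i : ℝ) * y i := by
  funext y i
  unfold IntLattice.mapR
  erw [hMat, Matrix.diagonal_map (by simp), Matrix.mulVec_diagonal]

lemma mapQ_eq : L.mapQ g.toLinearMap = fun (y : Fin 8 → ℚ) i => (sgn i : ℚ) * y i := by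
  funext y i
  unfold IntLattice.mapQ
  erw [hMat, Matrix.diagonal_map (by simp), Matrix.mulVec_diagonal]

lemma bform_sgn (x y : Fin 8 → ℤ) : L.bform (g x) (g y) = L.bform x y := by
  rw [g_apply, g_apply, bform_eq, bform_eq]
  simp only [Matrix.mulVec, dotProduct, Fin.sum_univ_eight]
  simp only [B8_00, B8_01, B8_02, B8_03,
    B8_04, B8_05, B8_06, B8_07, B8_10, B8_11, B8_12, B8_13, B8_14, B8_15, B8_16, B8_17,
    B8_20, B8_21, B8_22, B8_23, B8_24, B8_25, B8_26, B8_27, B8_30, B8_31, B8_32, B8_33,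
    B8_34, B8_35, B8_36, B8_37, B8_40, B8_41, B8_42, B8_43, B8_44, B8_45, B8_46, B8_47,
    B8_50, B8_51, B8_52, B8_53, B8_54, B8_55, B8_56, B8_57, B8_60, B8_61, B8_62, B8_63,
    B8_64, B8_65, B8_66, B8_67, B8_70, B8_71, B8_72, B8_73, B8_74, B8_75, B8_76, B8_77,
    sgn_0, sgn_1, sgn_2, sgn_3, sgn_4, sgn_5, sgn_6, sgn_7]
  ring

lemma bR_sgn (y z : Fin 8 → ℝ) :
    L.bR (fun i => (sgn i : ℝ) * y i) (fun i => (sgn i : ℝ) * z i) = L.bR y z := by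
  erw [bR_eq, bR_eq]
  simp only [Matrix.mulVec, dotProduct, Fin.sum_univ_eight, Matrix.map_apply]
  simp only [B8_00, B8_01, B8_02, B8_03,
    B8_04, B8_05, B8_06, B8_07, B8_10, B8_11, B8_12, B8_13, B8_14, B8_15, B8_16, B8_17,
    B8_20, B8_21, B8_22, B8_23, B8_24, B8_25, B8_26, B8_27, B8_30, B8_31, B8_32, B8_33,
    B8_34, B8_35, B8_36, B8_37, B8_40, B8_41, B8_42, B8_43, B8_44, B8_45, B8_46, B8_47,
    B8_50, B8_51, B8_52, B8_53, B8_54, B8_55, B8_56, B8_57, B8_60, B8_61, B8_62, B8_63,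
    B8_64, B8_65, B8_66, B8_67, B8_70, B8_71, B8_72, B8_73, B8_74, B8_75, B8_76, B8_77,
    sgn_0, sgn_1, sgn_2, sgn_3, sgn_4, sgn_5, sgn_6, sgn_7]
  push_cast
  ring

lemma bR_x0 : L.bR x0 x0 = -4 := by
  rw [bR_eq]
  simp only [Matrix.mulVec, dotProduct, Fin.sum_univ_eight, Matrix.map_apply]
  simp only [B8_00, B8_01, B8_02, B8_03,
    B8_04, B8_05, B8_06, B8_07, B8_10, B8_11, B8_12, B8_13, B8_14, B8_15, B8_16, B8_17,
    B8_20, B8_21, B8_22, B8_23, B8_24, B8_25, B8_26, B8_27, B8_30, B8_31, B8_32, B8_33,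
    B8_34, B8_35, B8_36, B8_37, B8_40, B8_41, B8_42, B8_43, B8_44, B8_45, B8_46, B8_47,
    B8_50, B8_51, B8_52, B8_53, B8_54, B8_55, B8_56, B8_57, B8_60, B8_61, B8_62, B8_63,
    B8_64, B8_65, B8_66, B8_67, B8_70, B8_71, B8_72, B8_73, B8_74, B8_75, B8_76, B8_77,
    x0_0, x0_1, x0_2, x0_3, x0_4, x0_5, x0_6, x0_7]
  push_cast
  ring

lemma x0_mem : x0 ∈ L.negCone :=
  ⟨by rw [bR_x0]; norm_num, fun v hv => absurd hv (no_root v)⟩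

lemma image_comp_fix {α : Type*} [TopologicalSpace α] {f : α → α} {S : Set α} {x : α}
    (hc : Continuous f) (hinv : Function.Involutive f) (hS : Set.MapsTo f S S)
    (hx : x ∈ S) (hfx : f x = x) :
    f '' connectedComponentIn S x = connectedComponentIn S x := by
  have hSS : f '' S = S :=
    Set.Subset.antisymm (Set.mapsTo_iff_image_subset.1 hS) (fun s hs => ⟨f s, hS hs, hinv s⟩)
  have hsub : f '' connectedComponentIn S x ⊆ connectedComponentIn S x := by
    have h := hc.image_connectedComponentIn_subset (s := S) hx
    rwa [hSS, hfx] at h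
  exact hsub.antisymm fun y hy => ⟨f y, hsub ⟨y, hy, rfl⟩, hinv y⟩

lemma pis0_0 : (Pi.single 0 1 : Fin 8 → ℤ) 0 = 1 := by decide
lemma pis0_1 : (Pi.single 0 1 : Fin 8 → ℤ) 1 = 0 := by decide
lemma pis0_2 : (Pi.single 0 1 : Fin 8 → ℤ) 2 = 0 := by decide
lemma pis0_3 : (Pi.single 0 1 : Fin 8 → ℤ) 3 = 0 := by decide
lemma pis0_4 : (Pi.single 0 1 : Fin 8 → ℤ) 4 = 0 := by decide
lemma pis0_5 : (Pi.single 0 1 : Fin 8 → ℤ) 5 = 0 := by decide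
lemma pis0_6 : (Pi.single 0 1 : Fin 8 → ℤ) 6 = 0 := by decide
lemma pis0_7 : (Pi.single 0 1 : Fin 8 → ℤ) 7 = 0 := by decide
lemma pis1_0 : (Pi.single 1 1 : Fin 8 → ℤ) 0 = 0 := by decide
lemma pis1_1 : (Pi.single 1 1 : Fin 8 → ℤ) 1 = 1 := by decide
lemma pis1_2 : (Pi.single 1 1 : Fin 8 → ℤ) 2 = 0 := by decide
lemma pis1_3 : (Pi.single 1 1 : Fin 8 → ℤ) 3 = 0 := by decide
lemma pis1_4 : (Pi.single 1 1 : Fin 8 → ℤ) 4 = 0 := by decide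
lemma pis1_5 : (Pi.single 1 1 : Fin 8 → ℤ) 5 = 0 := by decide
lemma pis1_6 : (Pi.single 1 1 : Fin 8 → ℤ) 6 = 0 := by decide
lemma pis1_7 : (Pi.single 1 1 : Fin 8 → ℤ) 7 = 0 := by decide

lemma bQ_single0 (y : Fin 8 → ℚ) :
    L.bQ y (fun i => (((Pi.single 0 1 : Fin 8 → ℤ)) i : ℚ)) = 2 * y 1 := by
  erw [bQ_eq]
  simp only [Matrix.mulVec, dotProduct, Fin.sum_univ_eight, Matrix.map_apply]
  simp only [B8_00, B8_01, B8_02, B8_03,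
    B8_04, B8_05, B8_06, B8_07, B8_10, B8_11, B8_12, B8_13, B8_14, B8_15, B8_16, B8_17,
    B8_20, B8_21, B8_22, B8_23, B8_24, B8_25, B8_26, B8_27, B8_30, B8_31, B8_32, B8_33,
    B8_34, B8_35, B8_36, B8_37, B8_40, B8_41, B8_42, B8_43, B8_44, B8_45, B8_46, B8_47,
    B8_50, B8_51, B8_52, B8_53, B8_54, B8_55, B8_56, B8_57, B8_60, B8_61, B8_62, B8_63,
    B8_64, B8_65, B8_66, B8_67, B8_70, B8_71, B8_72, B8_73, B8_74, B8_75, B8_76, B8_77]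
  simp only [pis0_0, pis0_1, pis0_2, pis0_3, pis0_4, pis0_5, pis0_6, pis0_7]
  push_cast
  ring

lemma bQ_single1 (y : Fin 8 → ℚ) :
    L.bQ y (fun i => (((Pi.single 1 1 : Fin 8 → ℤ)) i : ℚ)) = 2 * y 0 := by
  erw [bQ_eq]
  simp only [Matrix.mulVec, dotProduct, Fin.sum_univ_eight, Matrix.map_apply]
  simp only [B8_00, B8_01, B8_02, B8_03,
    B8_04, B8_05, B8_06, B8_07, B8_10, B8_11, B8_12, B8_13, B8_14, B8_15, B8_16, B8_17,
    B8_20, B8_21, B8_22, B8_23, B8_24, B8_25, B8_26, B8_27, B8_30, B8_31, B8_32, B8_33,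
    B8_34, B8_35, B8_36, B8_37, B8_40, B8_41, B8_42, B8_43, B8_44, B8_45, B8_46, B8_47,
    B8_50, B8_51, B8_52, B8_53, B8_54, B8_55, B8_56, B8_57, B8_60, B8_61, B8_62, B8_63,
    B8_64, B8_65, B8_66, B8_67, B8_70, B8_71, B8_72, B8_73, B8_74, B8_75, B8_76, B8_77]
  simp only [pis1_0, pis1_1, pis1_2, pis1_3, pis1_4, pis1_5, pis1_6, pis1_7]
  push_cast
  ring

end Statement5

namespace Statement5

lemma coordQ (y : Fin 8 → ℚ) (h0 : 2 * y 0 ∈ IntLattice.intQ) (h1 : 2 * y 1 ∈ IntLattice.intQ)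
    (i : Fin 8) : (sgn i : ℚ) * y i + y i ∈ IntLattice.intQ := by
  have hc : i = 0 ∨ i = 1 ∨ sgn i = -1 := by fin_cases i <;> decide
  rcases hc with rfl | rfl | h
  · rw [sgn_0, show ((1:ℤ):ℚ) * y 0 + y 0 = 2 * y 0 by push_cast; ring]
    exact h0
  · rw [sgn_1, show ((1:ℤ):ℚ) * y 1 + y 1 = 2 * y 1 by push_cast; ring]
    exact h1
  · rw [h, show ((-1:ℤ):ℚ) * y i + y i = 0 by push_cast; ring]
    exact zero_mem _

end Statement5

open IntLattice in
/-- `U(2)+E₆(2)` has no 2-roots and no 6-roots, and is achiral. -/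
theorem statement_5 :
    (∀ v : Fin (twist 2 latU + twist 2 latE6).n → ℤ,
        ¬ (twist 2 latU + twist 2 latE6).IsRoot v) ∧
    Achiral (twist 2 latU + twist 2 latE6) := by
  open Statement5 in
  constructor
  · exact no_root
  · refine ⟨g, fun x y => bform_sgn x y, ⟨x0, x0_mem, ?_⟩, ?_⟩
    · apply image_comp_fix
      · rw [mapR_eq]
        exact continuous_pi fun i => continuous_const.mul (continuous_apply i)
      · intro y
        rw [mapR_eq]
        funext i
        show (sgn i : ℝ) * ((sgn i : ℝ) * y i) = y i
        have h : sgn i * sgn i = 1 := by fin_cases i <;> decide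
        rw [← mul_assoc, ← Int.cast_mul, h]
        simp
      · intro y hy
        refine ⟨?_, fun v hv => absurd hv (no_root v)⟩
        rw [mapR_eq]
        show L.bR (fun i => (sgn i : ℝ) * y i) (fun i => (sgn i : ℝ) * y i) < 0
        erw [bR_sgn]
        exact hy.1
      · exact x0_mem
      · rw [mapR_eq]
        funext i
        show (sgn i : ℝ) * x0 i = x0 i
        fin_cases i <;> simp
    · intro y hy h3
      have h0 : L.bQ y (fun i => (((Pi.single 1 1 : Fin 8 → ℤ)) i : ℚ)) ∈ intQ :=
        hy ((Pi.single 1 1 : Fin 8 → ℤ))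
      have h1 : L.bQ y (fun i => (((Pi.single 0 1 : Fin 8 → ℤ)) i : ℚ)) ∈ intQ :=
        hy ((Pi.single 0 1 : Fin 8 → ℤ))
      erw [bQ_single1] at h0
      erw [bQ_single0] at h1
      show L.mapQ g.toLinearMap y + y ∈ Submodule.pi Set.univ fun _ => intQ
      rw [Submodule.mem_pi]
      intro i _
      rw [mapQ_eq]
      show (sgn i : ℚ) * y i + y i ∈ intQ
      exact coordQ y h0 h1 i
end

section
/- The lattice ⟨−2⟩+A₂+A₁+D₄ is isometric to the lattice U+A₂+4A₁. -/
def matP18 : Matrix (Fin 8) (Fin 8) ℤ :=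
  !![2, 0, 0, 0, 1, -1, -1, 1;
     -2, 0, 0, 0, -1, 0, 0, 0;
     0, -1, 0, 0, 0, 0, 0, 0;
     0, 0, -1, 0, 0, 0, 0, 0;
     1, 0, 0, 0, 1, -1, 0, 0;
     -1, 0, 0, 0, -1, 0, 1, 0;
     0, 0, 0, -1, 0, 0, 0, 0;
     -1, 0, 0, 0, 0, 0, 0, -1]

def matQ18 : Matrix (Fin 8) (Fin 8) ℤ :=
  !![1, -1, 0, 0, -1, 1, 0, 1;
     0, 0, -1, 0, 0, 0, 0, 0;
     0, 0, 0, -1, 0, 0, 0, 0;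
     0, 0, 0, 0, 0, 0, -1, 0;
     -2, 1, 0, 0, 2, -2, 0, -2;
     -1, 0, 0, 0, 0, -1, 0, -1;
     -1, 0, 0, 0, 1, 0, 0, -1;
     -1, 1, 0, 0, 1, -1, 0, -2]

lemma matPQ18 : matP18 * matQ18 = 1 := by decide

lemma matQP18 : matQ18 * matP18 = 1 := by decide

open IntLattice in
def gramM18 : Matrix (Fin 8) (Fin 8) ℤ := (latU + latA2 + rep 4 latA1).B

open IntLattice in
def gramL18 : Matrix (Fin 8) (Fin 8) ℤ := (latGen (-2) + latA2 + latA1 + latD4).B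

lemma gram18 : matP18.transpose * gramM18 * matP18 = gramL18 := by decide

lemma dot_trick (P A : Matrix (Fin 8) (Fin 8) ℤ) (x y : Fin 8 → ℤ) :
    dotProduct (P.mulVec x) (A.mulVec (P.mulVec y))
      = dotProduct x ((P.transpose * A * P).mulVec y) := by
  rw [Matrix.mulVec_mulVec, Matrix.dotProduct_mulVec, ← Matrix.vecMul_transpose,
    Matrix.vecMul_vecMul, ← Matrix.dotProduct_mulVec, Matrix.mul_assoc]

open IntLattice in
/-- `⟨−2⟩+A₂+A₁+D₄` is isometric to `U+A₂+4A₁`. -/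
theorem statement_18 :
    IntLattice.Isometric (latGen (-2) + latA2 + latA1 + latD4)
      (latU + latA2 + rep 4 latA1) := by
  refine ⟨LinearEquiv.ofLinear matP18.mulVecLin matQ18.mulVecLin ?_ ?_, ?_⟩
  · apply LinearMap.ext; intro v; show matP18.mulVec (matQ18.mulVec v) = v
    exact (fun w : Fin 8 → ℤ => by rw [Matrix.mulVec_mulVec, matPQ18, Matrix.one_mulVec] : ∀ w : Fin 8 → ℤ, matP18.mulVec (matQ18.mulVec w) = w) v
  · apply LinearMap.ext; intro v; show matQ18.mulVec (matP18.mulVec v) = v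
    exact (fun w : Fin 8 → ℤ => by rw [Matrix.mulVec_mulVec, matQP18, Matrix.one_mulVec] : ∀ w : Fin 8 → ℤ, matQ18.mulVec (matP18.mulVec w) = w) v
  · intro x y
    show dotProduct (matP18.mulVec x) (gramM18.mulVec (matP18.mulVec y))
      = dotProduct x (gramL18.mulVec y)
    exact (dot_trick matP18 gramM18 x y).trans (congrArg (fun M : Matrix (Fin 8) (Fin 8) ℤ => dotProduct x (M.mulVec y)) gram18)
end

section
/- The lattice U(2)+A₂+E₈(2) is isometric to the lattice U(2)+E₆(2)+D₄, and the lattice U+A₂+E₈(2) is isometric to the lattice U+E₆(2)+D₄. -/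
def matPA : Matrix (Fin 12) (Fin 12) ℤ :=
  !![5, -30, -9, 0, -18, 5, 0, 1, 0, -1, 4, 1;
    -5, 30, 9, 0, 18, -6, 1, 0, -1, 1, -4, -1;
    -2, 12, 4, 0, 7, -2, 0, 0, -1, 1, -1, 0;
    1, -6, -1, 0, -4, 1, 0, 0, 0, 0, 2, 0;
    -1, 7, 3, 0, 3, -1, 1, -1, 0, 1, 0, -1;
    0, 2, 1, 0, 0, 0, 0, 0, 0, 1, 0, -1;
    -1, 5, 2, 0, 3, -1, 0, 0, 0, 1, -1, -1;
    2, -12, -3, 0, -8, 3, 0, 0, 0, 0, 2, 0;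
    -2, 12, 4, 1, 6, -2, 0, 0, 0, 0, -2, 0;
    2, -12, -3, 0, -8, 2, 0, 0, 0, 0, 1, 1;
    1, -6, -2, 1, -4, 1, 0, 0, 0, 0, 1, 0;
    1, -6, -2, 1, -4, 1, 0, 0, 0, 0, 0, 1]
def matQA : Matrix (Fin 12) (Fin 12) ℤ :=
  !![30, -30, 30, -31, 30, -8, 8, -31, 24, -18, -12, -12;
    -5, 5, -5, 5, -5, 2, -2, 5, -4, 3, 2, 2;
    12, -12, 12, -12, 12, -4, 4, -12, 10, -7, -5, -5;
    6, -6, 6, -6, 6, -2, 2, -6, 5, -4, -2, -2;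
    9, -9, 9, -9, 9, -3, 3, -9, 7, -6, -4, -3;
    0, 0, 0, 0, 0, 0, 0, 1, 0, -1, -1, 1;
    -3, 4, -4, 4, -3, 1, -1, 4, -3, 1, 0, 3;
    -7, 8, -8, 9, -8, 3, -2, 8, -6, 3, 1, 5;
    -11, 11, -12, 13, -11, 4, -3, 11, -9, 5, 2, 7;
    -8, 8, -8, 9, -8, 3, -2, 8, -7, 4, 2, 5;
    -6, 6, -6, 7, -6, 2, -2, 6, -5, 3, 2, 3;
    -6, 6, -6, 7, -6, 2, -2, 6, -5, 3, 1, 4]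
def matPB : Matrix (Fin 12) (Fin 12) ℤ :=
  !![5, -5, 5, -4, 10, 0, -6, 2, 0, 0, 0, 0;
    -7, 7, -7, 5, -14, 0, 8, -4, 0, 0, 0, 2;
    1, -1, 1, -1, 2, 0, -1, 0, 0, 0, 1, 0;
    2, -2, 2, -2, 4, 0, -2, 0, 0, 1, 0, 0;
    -2, 2, -2, 1, -4, 0, 3, -3, 1, 1, 0, 0;
    -1, 1, -1, 0, -2, 0, 2, -2, 1, 0, 0, 0;
    2, -2, 2, -2, 4, 0, -2, 0, 1, 0, 0, -1;
    -2, 2, -2, 1, -4, 0, 3, -2, 0, 1, 0, 0;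
    -1, 1, 0, 0, -4, 2, 0, 0, 0, 0, 0, 0;
    0, 0, 0, 0, -1, 2, -1, 0, 0, 0, 0, 0;
    -2, 2, -2, 1, -5, 1, 1, 0, 0, 0, 0, 0;
    0, 1, 0, 0, -2, 1, 0, 0, 0, 0, 0, 0]
def matQB : Matrix (Fin 12) (Fin 12) ℤ :=
  !![7, -5, 0, -10, 6, 4, -10, 4, -1, -1, 3, 1;
    -7, 5, 0, 10, -6, -4, 10, -4, 0, 1, -3, 1;
    -3, 2, 0, 4, -2, -2, 4, -2, 1, 0, -2, 0;
    1, -1, 0, -2, 2, 0, -2, 0, 0, 0, 0, 0;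
    -5, 3, 0, 7, -4, -2, 6, -3, 0, 1, -2, 0;
    -3, 1, 0, 4, -2, 0, 2, -2, 0, 1, -1, 0;
    -1, -1, 0, 1, 0, 2, -2, -1, 0, 0, 0, 0;
    -3, 0, 0, 4, -1, 1, 0, -3, 0, 0, 0, 0;
    -3, 0, 0, 4, 0, 1, 0, -4, 0, 0, 0, 0;
    -2, 0, 0, 3, 0, 0, 0, -2, 0, 0, 0, 0;
    -1, 0, 1, 1, 0, 0, 0, -1, 0, 0, 0, 0;
    -1, 0, 0, 2, 0, 1, -1, -2, 0, 0, 0, 0]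

open Matrix in
lemma isom_helper (L M : IntLattice) (P : Matrix (Fin M.n) (Fin L.n) ℤ)
    (Q : Matrix (Fin L.n) (Fin M.n) ℤ)
    (h1 : Q * P = 1) (h2 : P * Q = 1)
    (h3 : Pᵀ * M.B * P = L.B) :
    IntLattice.Isometric L M := by
  refine ⟨LinearEquiv.ofLinear P.mulVecLin Q.mulVecLin ?_ ?_, ?_⟩
  · ext x i; simp [← Matrix.mulVecLin_mul, h2]
  · ext x i; simp [← Matrix.mulVecLin_mul, h1]
  · intro x y
    show (P.mulVec x) ⬝ᵥ (M.B.mulVec (P.mulVec y)) = x ⬝ᵥ (L.B.mulVec y)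
    rw [← h3, Matrix.mul_assoc, ← Matrix.mulVec_mulVec]
    conv_rhs => rw [Matrix.dotProduct_mulVec, Matrix.vecMul_transpose]
    rw [Matrix.mulVec_mulVec]

set_option maxHeartbeats 4000000 in
open IntLattice in
/-- `U(2)+A₂+E₈(2) ≅ U(2)+E₆(2)+D₄` and `U+A₂+E₈(2) ≅ U+E₆(2)+D₄`. -/
theorem statement_19 :
    IntLattice.Isometric (twist 2 latU + latA2 + twist 2 latE8)
      (twist 2 latU + twist 2 latE6 + latD4) ∧
    IntLattice.Isometric (latU + latA2 + twist 2 latE8)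
      (latU + twist 2 latE6 + latD4) := by
  constructor
  · exact isom_helper _ _ matPA matQA (by decide) (by decide) (by decide)
  · exact isom_helper _ _ matPB matQB (by decide) (by decide) (by decide)
end
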